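/- arXiv:1403.0234 — 6 statements merged into one kernel-verified Lean document; each statement's English description precedes it below -/
import Mathlib

section
/- An element r of the ring of Colombeau generalized real numbers $\widetilde{\mathbb{R}}$ is invertible in $\widetilde{\mathbb{R}}$ if and only if it is strictly nonzero, i.e., if and only if it has a representative $(r_\varepsilon)_{\varepsilon\in(0,1]}$ for which there exist $m\in\mathbb{N}$ and $\varepsilon_0>0$ such that $|r_\varepsilon|\ge\varepsilon^m$ for all $\varepsilon<\varepsilon_0$ (equivalently, every representative satisfies this condition). -/
open scoped BigOperators

namespace Colombeau

/-- A net `(r_ε)` of real numbers is *moderate* if `|r_ε| = O(ε^{-N})` as `ε → 0⁺`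
for some `N ∈ ℕ`. -/
def Moderate (r : ℝ → ℝ) : Prop :=
  ∃ N : ℕ, ∃ C : ℝ, 0 < C ∧ ∃ ε₀ : ℝ, 0 < ε₀ ∧
    ∀ ε : ℝ, 0 < ε → ε ≤ 1 → ε < ε₀ → |r ε| ≤ C / ε ^ N

/-- A net `(r_ε)` of real numbers is *negligible* if `|r_ε| = O(ε^m)` as `ε → 0⁺`
for every `m ∈ ℕ`. -/
def Negligible (r : ℝ → ℝ) : Prop :=
  ∀ m : ℕ, ∃ C : ℝ, 0 < C ∧ ∃ ε₀ : ℝ, 0 < ε₀ ∧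
    ∀ ε : ℝ, 0 < ε → ε ≤ 1 → ε < ε₀ → |r ε| ≤ C * ε ^ m

/-- The ring of moderate nets, as a subring of `ℝ → ℝ`. -/
def moderateSubring : Subring (ℝ → ℝ) where
  carrier := {r | Moderate r}
  zero_mem' := ⟨0, 1, one_pos, 1, one_pos, fun ε hε hε1 _ => by simp⟩
  one_mem' := ⟨0, 1, one_pos, 1, one_pos, fun ε hε hε1 _ => by simp⟩
  add_mem' := by
    rintro r s ⟨N1, C1, hC1, e1, he1, h1⟩ ⟨N2, C2, hC2, e2, he2, h2⟩
    refine ⟨N1 + N2, C1 + C2, by positivity, min e1 e2, by positivity, ?_⟩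
    intro ε hε hε1 hεe
    have k1 : |r ε| ≤ C1 / ε ^ (N1 + N2) := by
      refine (h1 ε hε hε1 (lt_of_lt_of_le hεe (min_le_left _ _))).trans ?_
      exact div_le_div_of_nonneg_left hC1.le (pow_pos hε _)
        (pow_le_pow_of_le_one hε.le hε1 (Nat.le_add_right _ _))
    have k2 : |s ε| ≤ C2 / ε ^ (N1 + N2) := by
      refine (h2 ε hε hε1 (lt_of_lt_of_le hεe (min_le_right _ _))).trans ?_
      exact div_le_div_of_nonneg_left hC2.le (pow_pos hε _)
        (pow_le_pow_of_le_one hε.le hε1 (Nat.le_add_left _ _))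
    calc |(r + s) ε| ≤ |r ε| + |s ε| := abs_add_le _ _
      _ ≤ C1 / ε ^ (N1 + N2) + C2 / ε ^ (N1 + N2) := add_le_add k1 k2
      _ = (C1 + C2) / ε ^ (N1 + N2) := (add_div _ _ _).symm
  mul_mem' := by
    rintro r s ⟨N1, C1, hC1, e1, he1, h1⟩ ⟨N2, C2, hC2, e2, he2, h2⟩
    refine ⟨N1 + N2, C1 * C2, by positivity, min e1 e2, by positivity, ?_⟩
    intro ε hε hε1 hεe
    have k1 := h1 ε hε hε1 (lt_of_lt_of_le hεe (min_le_left _ _))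
    have k2 := h2 ε hε hε1 (lt_of_lt_of_le hεe (min_le_right _ _))
    calc |(r * s) ε| = |r ε| * |s ε| := abs_mul _ _
      _ ≤ (C1 / ε ^ N1) * (C2 / ε ^ N2) :=
          mul_le_mul k1 k2 (abs_nonneg _) (by positivity)
      _ = (C1 * C2) / ε ^ (N1 + N2) := by rw [div_mul_div_comm, ← pow_add]
  neg_mem' := by
    rintro r ⟨N, C, hC, e0, he0, h⟩
    exact ⟨N, C, hC, e0, he0, fun ε hε hε1 hεe => by
      simpa using h ε hε hε1 hεe⟩

/-- The ideal of negligible nets inside the ring of moderate nets. -/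
def negligibleIdeal : Ideal moderateSubring where
  carrier := {r | Negligible (r : ℝ → ℝ)}
  zero_mem' := by
    intro m
    exact ⟨1, one_pos, 1, one_pos, fun ε hε hε1 _ => by
      simpa using (pow_nonneg hε.le m)⟩
  add_mem' := by
    intro r s hr hs m
    obtain ⟨C1, hC1, e1, he1, h1⟩ := hr m
    obtain ⟨C2, hC2, e2, he2, h2⟩ := hs m
    refine ⟨C1 + C2, by positivity, min e1 e2, by positivity, fun ε hε hε1 hεe => ?_⟩
    calc |((r : ℝ → ℝ) + (s : ℝ → ℝ)) ε| ≤ |(r : ℝ → ℝ) ε| + |(s : ℝ → ℝ) ε| := abs_add_le _ _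
      _ ≤ C1 * ε ^ m + C2 * ε ^ m :=
          add_le_add (h1 ε hε hε1 (lt_of_lt_of_le hεe (min_le_left _ _)))
            (h2 ε hε hε1 (lt_of_lt_of_le hεe (min_le_right _ _)))
      _ = (C1 + C2) * ε ^ m := (add_mul _ _ _).symm
  smul_mem' := by
    intro c x hx m
    obtain ⟨N, C1, hC1, e1, he1, h1⟩ := c.2
    obtain ⟨C2, hC2, e2, he2, h2⟩ := hx (m + N)
    refine ⟨C1 * C2, by positivity, min e1 e2, by positivity, fun ε hε hε1 hεe => ?_⟩
    have k1 := h1 ε hε hε1 (lt_of_lt_of_le hεe (min_le_left _ _))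
    have k2 := h2 ε hε hε1 (lt_of_lt_of_le hεe (min_le_right _ _))
    have hne : ε ^ N ≠ 0 := by positivity
    calc |((c : ℝ → ℝ) * (x : ℝ → ℝ)) ε| = |(c : ℝ → ℝ) ε| * |(x : ℝ → ℝ) ε| := abs_mul _ _
      _ ≤ (C1 / ε ^ N) * (C2 * ε ^ (m + N)) :=
          mul_le_mul k1 k2 (abs_nonneg _) (by positivity)
      _ = (C1 * C2) * ε ^ m := by field_simp [pow_add]; ring

/-- The ring `ℝ̃` of Colombeau generalized real numbers: moderate nets modulo
negligible nets. -/
def RTilde : Type := moderateSubring ⧸ negligibleIdeal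

noncomputable instance : CommRing RTilde :=
  inferInstanceAs (CommRing (moderateSubring ⧸ negligibleIdeal))

/-- A symplectic form on an `ℝ̃`-module `V`: an `ℝ̃`-bilinear form that is
skew-symmetric and non-degenerate. -/
structure IsSymplecticForm {V : Type*} [AddCommGroup V] [Module RTilde V]
    (σ : V →ₗ[RTilde] V →ₗ[RTilde] RTilde) : Prop where
  skew : ∀ v w : V, σ v w = - σ w v
  nondeg : ∀ v : V, (∀ w : V, σ v w = 0) → v = 0

end Colombeau

namespace Colombeau

/-- A moderate net is *strictly nonzero* if `|r_ε| ≥ ε^m` for some `m ∈ ℕ` and all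
sufficiently small `ε`. -/
def StrictlyNonzero (s : moderateSubring) : Prop :=
  ∃ m : ℕ, ∃ ε₀ : ℝ, 0 < ε₀ ∧ ∀ ε : ℝ, 0 < ε → ε ≤ 1 → ε < ε₀ → ε ^ m ≤ |(s : ℝ → ℝ) ε|

set_option maxHeartbeats 1000000 in
lemma strictlyNonzero_of_isUnit {r : RTilde} (hr : IsUnit r)
    (s : moderateSubring) (hs : (Ideal.Quotient.mk negligibleIdeal s : RTilde) = r) :
    StrictlyNonzero s := by
  obtain ⟨u, hu⟩ := hr
  obtain ⟨t, ht⟩ := Ideal.Quotient.mk_surjective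
    (I := negligibleIdeal) (((u⁻¹ : Units RTilde) : RTilde))
  have hmul : (Ideal.Quotient.mk negligibleIdeal (s * t) : RTilde) = 1 := by
    rw [map_mul, hs, ht, ← hu]
    exact u.mul_inv
  have hmem : s * t - 1 ∈ negligibleIdeal := by
    rw [← Ideal.Quotient.eq_zero_iff_mem, (Ideal.Quotient.mk negligibleIdeal).map_sub,
      hmul, (Ideal.Quotient.mk negligibleIdeal).map_one, sub_self]
  have hn : Negligible ((s * t - 1 : moderateSubring) : ℝ → ℝ) := hmem
  obtain ⟨N, C, hC, e1, he1, h1⟩ := t.2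
  obtain ⟨C', hC', e2, he2, h2⟩ := hn 1
  refine ⟨N + 1, min (min e1 e2) (min (1 / (2 * C')) (1 / (2 * C))), by positivity, ?_⟩
  intro ε hε hε1 hεe
  have k1 := h1 ε hε hε1 (lt_of_lt_of_le hεe ((min_le_left _ _).trans (min_le_left _ _)))
  have k2 := h2 ε hε hε1 (lt_of_lt_of_le hεe ((min_le_left _ _).trans (min_le_right _ _)))
  have hεC' : ε < 1 / (2 * C') :=
    lt_of_lt_of_le hεe ((min_le_right _ _).trans (min_le_left _ _))
  have hεC : ε < 1 / (2 * C) :=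
    lt_of_lt_of_le hεe ((min_le_right _ _).trans (min_le_right _ _))
  have hcoe : ((s * t - 1 : moderateSubring) : ℝ → ℝ) ε
      = (s : ℝ → ℝ) ε * (t : ℝ → ℝ) ε - 1 := rfl
  rw [hcoe, pow_one] at k2
  set a := |(s : ℝ → ℝ) ε| with ha
  set b := |(t : ℝ → ℝ) ε| with hb
  have habs : 1 - |(s : ℝ → ℝ) ε * (t : ℝ → ℝ) ε - 1| ≤ a * b := by
    have h3 := abs_sub_abs_le_abs_sub (1 : ℝ) ((s : ℝ → ℝ) ε * (t : ℝ → ℝ) ε)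
    rw [abs_one, abs_sub_comm] at h3
    rw [ha, hb, ← abs_mul]
    linarith
  have hA : (1 : ℝ) / 2 ≤ a * b := by
    have hC'ε : C' * ε ≤ 1 / 2 := by
      rw [lt_div_iff₀ (by positivity)] at hεC'
      nlinarith
    linarith
  have k1' : b * ε ^ N ≤ C := by
    rw [le_div_iff₀ (pow_pos hε N)] at k1
    exact k1
  have hsC : ε ^ N ≤ 2 * a * C := by
    nlinarith [pow_pos hε N, abs_nonneg ((s : ℝ → ℝ) ε), abs_nonneg ((t : ℝ → ℝ) ε),
      mul_le_mul_of_nonneg_left k1' (abs_nonneg ((s : ℝ → ℝ) ε)),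
      mul_le_mul_of_nonneg_right hA (pow_pos hε N).le]
  have h2Cε : 2 * C * ε ≤ 1 := by
    rw [lt_div_iff₀ (by positivity)] at hεC
    linarith
  have ha0 : 0 ≤ a := abs_nonneg _
  calc ε ^ (N + 1) = ε ^ N * ε := by rw [pow_succ]
    _ ≤ 2 * a * C * ε := by nlinarith
    _ ≤ a := by nlinarith

lemma isUnit_of_strictlyNonzero {s : moderateSubring} (h : StrictlyNonzero s) :
    IsUnit (Ideal.Quotient.mk negligibleIdeal s : RTilde) := by
  obtain ⟨m, ε₀, hε₀, hs⟩ := h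
  set t0 : ℝ → ℝ := fun ε => if (s : ℝ → ℝ) ε = 0 then 0 else ((s : ℝ → ℝ) ε)⁻¹ with ht0
  have hne : ∀ ε : ℝ, 0 < ε → ε ≤ 1 → ε < ε₀ → (s : ℝ → ℝ) ε ≠ 0 := by
    intro ε hε hε1 hεe h0
    have := hs ε hε hε1 hεe
    rw [h0, abs_zero] at this
    exact absurd this (not_le.mpr (pow_pos hε m))
  have htmod : Moderate t0 := by
    refine ⟨m, 1, one_pos, ε₀, hε₀, ?_⟩
    intro ε hε hε1 hεe
    have hne' := hne ε hε hε1 hεe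
    have hsb := hs ε hε hε1 hεe
    simp only [ht0, if_neg hne', abs_inv]
    rw [one_div]
    exact inv_anti₀ (pow_pos hε m) hsb
  set t : moderateSubring := ⟨t0, htmod⟩ with htdef
  refine IsUnit.of_mul_eq_one (Ideal.Quotient.mk negligibleIdeal t) ?_
  rw [← map_mul, ← map_one (Ideal.Quotient.mk negligibleIdeal), Ideal.Quotient.eq]
  intro m'
  refine ⟨1, one_pos, ε₀, hε₀, ?_⟩
  intro ε hε hε1 hεe
  have hne' := hne ε hε hε1 hεe
  have : ((s * t - 1 : moderateSubring) : ℝ → ℝ) ε = 0 := by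
    have hc : ((s * t - 1 : moderateSubring) : ℝ → ℝ) ε = (s : ℝ → ℝ) ε * t0 ε - 1 := rfl
    rw [hc, ht0]
    simp only [if_neg hne']
    field_simp
    exact sub_self 1
  rw [this, abs_zero]
  positivity

/-- An element `r` of the ring `ℝ̃` of Colombeau generalized real numbers is invertible
in `ℝ̃` if and only if it has a representative which is strictly nonzero; equivalently,
if and only if every representative of `r` is strictly nonzero. -/
theorem isUnit_iff_strictlyNonzero (r : RTilde) :
    (IsUnit r ↔
      ∃ s : moderateSubring, (Ideal.Quotient.mk negligibleIdeal s : RTilde) = r ∧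
        StrictlyNonzero s) ∧
    (IsUnit r ↔
      ∀ s : moderateSubring, (Ideal.Quotient.mk negligibleIdeal s : RTilde) = r →
        StrictlyNonzero s) := by
  constructor
  · constructor
    · intro hr
      obtain ⟨s, hs⟩ := Ideal.Quotient.mk_surjective (I := negligibleIdeal) r
      exact ⟨s, hs, strictlyNonzero_of_isUnit hr s hs⟩
    · rintro ⟨s, hs, h⟩
      rw [← hs]
      exact isUnit_of_strictlyNonzero h
  · constructor
    · intro hr s hs
      exact strictlyNonzero_of_isUnit hr s hs
    · intro h
      obtain ⟨s, hs⟩ := Ideal.Quotient.mk_surjective (I := negligibleIdeal) r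
      rw [← hs]
      exact isUnit_of_strictlyNonzero (h s hs)

end Colombeau
end

section
/- If $(V,\sigma)$ is a free symplectic $\widetilde{\mathbb{R}}$-module of finite rank, then the rank of $V$ is even. -/
open scoped BigOperators

namespace Colombeau

open Matrix in
lemma skew_kernel {ι : Type*} [Fintype ι] [DecidableEq ι] (hodd : Odd (Fintype.card ι))
    (S : Matrix ι ι ℝ) (hS : Sᵀ = -S) :
    ∃ x : ι → ℝ, S.mulVec x = 0 ∧ ∑ i, (x i) ^ 2 = 1 := by
  have hdet : S.det = 0 := by
    have h1 : S.det = (-1) ^ Fintype.card ι * S.det := by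
      conv_lhs => rw [← Matrix.det_transpose, hS, Matrix.det_neg]
    rw [hodd.neg_one_pow] at h1
    linarith
  obtain ⟨v, hv, hv0⟩ := (Matrix.exists_mulVec_eq_zero_iff).2 hdet
  have hpos : 0 < ∑ i, (v i) ^ 2 := by
    rcases Function.ne_iff.1 hv with ⟨i, hi⟩
    have : 0 < (v i) ^ 2 := by
      have h2 := sq_nonneg (v i)
      rcases h2.lt_or_eq with h | h
      · exact h
      · exact absurd (pow_eq_zero_iff (n := 2) (by norm_num) |>.1 h.symm) hi
    exact this.trans_le (Finset.single_le_sum (fun j _ => sq_nonneg (v j)) (Finset.mem_univ i))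
  refine ⟨(Real.sqrt (∑ i, (v i) ^ 2))⁻¹ • v, ?_, ?_⟩
  · rw [Matrix.mulVec_smul, hv0, smul_zero]
  · have hsq : Real.sqrt (∑ i, (v i) ^ 2) ^ 2 = ∑ i, (v i) ^ 2 := Real.sq_sqrt hpos.le
    have hsne : Real.sqrt (∑ i, (v i) ^ 2) ≠ 0 := ne_of_gt (Real.sqrt_pos.2 hpos)
    simp only [Pi.smul_apply, smul_eq_mul, mul_pow, ← Finset.mul_sum]
    rw [← hsq]
    field_simp
    rw [Real.sqrt_sq (Real.sqrt_nonneg _)]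

lemma moderate_const (r : ℝ) : Moderate (fun _ => r) :=
  ⟨0, |r| + 1, by positivity, 1, one_pos, fun ε _ _ _ => by
    rw [pow_zero, div_one]; linarith⟩

lemma moderate_of_abs_le_one {f : ℝ → ℝ} (h : ∀ ε, |f ε| ≤ 1) : Moderate f :=
  ⟨0, 2, two_pos, 1, one_pos, fun ε _ _ _ => by
    rw [pow_zero, div_one]; linarith [h ε]⟩

lemma not_negligible_one : ¬ Negligible (1 : ℝ → ℝ) := by
  intro h
  obtain ⟨C, hC, ε₀, hε₀, H⟩ := h 1
  set ε := min (ε₀ / 2) (min 1 (1 / (2 * C))) with hεdef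
  have hεpos : 0 < ε := lt_min (by linarith) (lt_min one_pos (by positivity))
  have h1 : ε ≤ 1 := le_trans (min_le_right _ _) (min_le_left _ _)
  have h2 : ε < ε₀ := lt_of_le_of_lt (min_le_left _ _) (by linarith)
  have h3 : ε ≤ 1 / (2 * C) := le_trans (min_le_right _ _) (min_le_right _ _)
  have h4 := H ε hεpos h1 h2
  rw [pow_one] at h4
  have h5 : |(1 : ℝ → ℝ) ε| = 1 := by simp
  rw [h5] at h4
  have h6 : C * ε ≤ C * (1 / (2 * C)) := mul_le_mul_of_nonneg_left h3 hC.le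
  have h7 : C * (1 / (2 * C)) = 1 / 2 := by field_simp
  linarith

instance : Nontrivial RTilde := by
  refine ⟨⟨1, 0, fun h => ?_⟩⟩
  have h1 : (1 : moderateSubring) ∈ negligibleIdeal := by
    rw [← Ideal.Quotient.eq_zero_iff_mem, map_one]
    exact h
  have h2 : Negligible ((1 : moderateSubring) : ℝ → ℝ) := h1
  rw [OneMemClass.coe_one] at h2
  exact not_negligible_one h2

/-- The quotient map onto `RTilde`, as a ring homomorphism. -/
def mkRT : moderateSubring →+* RTilde := Ideal.Quotient.mk negligibleIdeal

lemma mkRT_eq_zero_iff (r : moderateSubring) : mkRT r = 0 ↔ r ∈ negligibleIdeal :=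
  Ideal.Quotient.eq_zero_iff_mem

lemma mkRT_surjective : Function.Surjective mkRT :=
  Ideal.Quotient.mk_surjective


end Colombeau

namespace Colombeau

/-- The rank of a free symplectic `ℝ̃`-module of finite rank is even. -/
theorem rank_even_of_symplectic {V : Type*} [AddCommGroup V] [Module RTilde V]
    [Module.Free RTilde V] [Module.Finite RTilde V]
    (σ : V →ₗ[RTilde] V →ₗ[RTilde] RTilde) (hσ : IsSymplecticForm σ) :
    Even (Module.finrank RTilde V) := by
  classical
  rw [← Nat.not_odd_iff_even]
  intro hodd'
  let ι := Module.Free.ChooseBasisIndex RTilde V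
  let b : Module.Basis ι RTilde V := Module.Free.chooseBasis RTilde V
  have hcard : Odd (Fintype.card ι) := by
    rwa [Module.finrank_eq_card_chooseBasisIndex RTilde V] at hodd'
  set M : ι → ι → RTilde := fun i j => σ (b i) (b j) with hMdef
  have hskew : ∀ i j, M i j = - M j i := fun i j => hσ.skew _ _
  choose m hm using fun i j => mkRT_surjective (M i j)
  let S : ℝ → Matrix ι ι ℝ := fun ε => Matrix.of fun i j =>
    ((m i j : ℝ → ℝ) ε - (m j i : ℝ → ℝ) ε) / 2
  have hSskew : ∀ ε, (S ε).transpose = -(S ε) := by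
    intro ε
    ext i j
    simp only [Matrix.transpose_apply, Matrix.neg_apply, S, Matrix.of_apply]
    ring
  have hSentry : ∀ ε i j, S ε i j = -(S ε j i) := by
    intro ε i j
    have h' : (S ε).transpose j i = (-(S ε)) j i := by rw [hSskew ε]
    simpa [Matrix.transpose_apply, Matrix.neg_apply] using h'
  choose x hx1 hx2 using fun ε => skew_kernel hcard (S ε) (hSskew ε)
  have hxb : ∀ ε i, |x ε i| ≤ 1 := by
    intro ε i
    have h1 : (x ε i) ^ 2 ≤ ∑ k, (x ε k) ^ 2 :=
      Finset.single_le_sum (f := fun k => (x ε k) ^ 2)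
        (fun j _ => sq_nonneg _) (Finset.mem_univ i)
    rw [hx2 ε] at h1
    rw [abs_le]
    constructor <;> nlinarith
  let c : ι → moderateSubring := fun i =>
    ⟨fun ε => x ε i, moderate_of_abs_le_one (fun ε => hxb ε i)⟩
  -- at least one `c i` is nonzero in `RTilde`
  have hcnz : ∃ i, mkRT (c i) ≠ 0 := by
    by_contra hall
    push_neg at hall
    have hmem : ∀ i, c i ∈ negligibleIdeal := fun i => (mkRT_eq_zero_iff _).1 (hall i)
    have hsum : (∑ i, c i * c i) ∈ negligibleIdeal :=
      Ideal.sum_mem _ (fun i _ => Ideal.mul_mem_left _ _ (hmem i))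
    have heq : ((∑ i, c i * c i : moderateSubring) : ℝ → ℝ) = 1 := by
      funext ε
      have h1 : ((∑ i, c i * c i : moderateSubring) : ℝ → ℝ) ε
          = ∑ i, ((c i : ℝ → ℝ) ε * (c i : ℝ → ℝ) ε) := by
        rw [AddSubmonoidClass.coe_finset_sum, Finset.sum_apply]
        exact Finset.sum_congr rfl fun i _ => rfl
      rw [h1, Pi.one_apply, ← hx2 ε]
      refine Finset.sum_congr rfl fun i _ => ?_
      simp [c, sq]
    have hneg : Negligible (1 : ℝ → ℝ) := heq ▸ hsum
    exact not_negligible_one hneg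
  obtain ⟨i₀, hi₀⟩ := hcnz
  -- kernel equations
  have hker : ∀ j, ∑ i, mkRT (c i) * M i j = 0 := by
    intro j
    have hmemj : (∑ i, c i * m i j) ∈ negligibleIdeal := by
      have key : (∑ i, c i * m i j) =
          ∑ i, c i * (⟨fun _ => (1 : ℝ) / 2, moderate_const _⟩ * (m i j + m j i)) := by
        apply Subtype.ext
        rw [AddSubmonoidClass.coe_finset_sum, AddSubmonoidClass.coe_finset_sum]
        funext ε
        rw [Finset.sum_apply, Finset.sum_apply]
        have h0 : ∑ i, x ε i * S ε i j = 0 := by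
          have hmv : (S ε).mulVec (x ε) j = 0 := by rw [hx1 ε]; rfl
          have hmv' : ∑ k, S ε j k * x ε k = 0 := by
            simpa [Matrix.mulVec, dotProduct] using hmv
          have hstep : ∀ i, x ε i * S ε i j = -(S ε j i * x ε i) := by
            intro i
            rw [hSentry ε i j]; ring
          rw [Finset.sum_congr rfl (fun i _ => hstep i), Finset.sum_neg_distrib, hmv',
            neg_zero]
        have expand : ∀ i, ((c i * m i j : moderateSubring) : ℝ → ℝ) ε =
            ((c i * (⟨fun _ => (1 : ℝ) / 2, moderate_const _⟩ * (m i j + m j i))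
              : moderateSubring) : ℝ → ℝ) ε + x ε i * S ε i j := by
          intro i
          show (c i : ℝ → ℝ) ε * (m i j : ℝ → ℝ) ε
            = (c i : ℝ → ℝ) ε * ((1 : ℝ) / 2 * ((m i j : ℝ → ℝ) ε + (m j i : ℝ → ℝ) ε))
              + x ε i * S ε i j
          have hc : (c i : ℝ → ℝ) ε = x ε i := rfl
          have hs : S ε i j = ((m i j : ℝ → ℝ) ε - (m j i : ℝ → ℝ) ε) / 2 := rfl
          rw [hc, hs]
          ring
        rw [Finset.sum_congr rfl (fun i _ => expand i), Finset.sum_add_distrib, h0, add_zero]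
      rw [key]
      refine Ideal.sum_mem _ (fun i _ => Ideal.mul_mem_left _ _ (Ideal.mul_mem_left _ _ ?_))
      rw [← mkRT_eq_zero_iff, map_add, hm, hm, hskew i j, neg_add_cancel]
    calc ∑ i, mkRT (c i) * M i j
        = mkRT (∑ i, c i * m i j) := by
          rw [map_sum]
          exact Finset.sum_congr rfl fun i _ => by rw [map_mul, hm]
      _ = 0 := (mkRT_eq_zero_iff _).2 hmemj
  -- conclude via nondegeneracy
  set v : V := ∑ i, (mkRT (c i)) • b i with hvdef
  have hσv : σ v = 0 := by
    refine b.ext fun j => ?_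
    have h1 : σ v (b j) = ∑ i, mkRT (c i) * M i j := by
      rw [hvdef, map_sum, LinearMap.sum_apply]
      refine Finset.sum_congr rfl fun i _ => ?_
      rw [map_smul, LinearMap.smul_apply, smul_eq_mul, hMdef]
    rw [h1, hker j, LinearMap.zero_apply]
  have hv0 : v = 0 := hσ.nondeg v (fun w => by rw [hσv, LinearMap.zero_apply])
  have hli := Fintype.linearIndependent_iff.1 b.linearIndependent
    (fun i => mkRT (c i)) (by rw [← hvdef]; exact hv0) i₀
  exact hi₀ hli


end Colombeau
end

section
/- Let $(V_1,\sigma_1)$ and $(V_2,\sigma_2)$ be free symplectic $\widetilde{\mathbb{R}}$-modules of equal finite rank. Then every symplectic map $f:V_1\to V_2$ is a symplectomorphism, i.e., an $\widetilde{\mathbb{R}}$-linear isomorphism preserving the symplectic forms. -/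
open scoped BigOperators

namespace Colombeau

open Matrix

/-- For every real matrix there is a unit vector `u` (in the Euclidean norm) such that
every coordinate of `A *ᵥ u` is controlled by the determinant of `A`. -/
lemma key_real (d : ℕ) (hd : 0 < d) (A : Matrix (Fin d) (Fin d) ℝ) :
    ∃ u : Fin d → ℝ, (∑ j, u j ^ 2 = 1) ∧ ∀ j, ((A.mulVec u j) ^ 2) ^ d ≤ A.det ^ 2 := by
  have hG : (Aᴴ * A).IsHermitian := isHermitian_conjTranspose_mul_self A
  have hpsd : (Aᴴ * A).PosSemidef := posSemidef_conjTranspose_mul_self A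
  have hnn : ∀ i, 0 ≤ hG.eigenvalues i := hpsd.eigenvalues_nonneg
  haveI : Nonempty (Fin d) := ⟨⟨0, hd⟩⟩
  obtain ⟨i₀, hi₀⟩ := Finite.exists_min hG.eigenvalues
  set u : EuclideanSpace ℝ (Fin d) := hG.eigenvectorBasis i₀ with hu
  have hnorm : ‖u‖ = 1 := hG.eigenvectorBasis.orthonormal.1 i₀
  have hsum : ∑ j, u j ^ 2 = 1 := by
    have h := real_inner_self_eq_norm_sq u
    rw [hnorm] at h
    rw [PiLp.inner_apply] at h
    simpa [pow_two] using h
  have heig : (Aᴴ * A) *ᵥ ⇑u = hG.eigenvalues i₀ • ⇑u := hG.mulVec_eigenvectorBasis i₀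
  have hAv : ∑ i, (A *ᵥ ⇑u) i ^ 2 = hG.eigenvalues i₀ := by
    have h1 : ⇑u ⬝ᵥ ((Aᴴ * A) *ᵥ ⇑u) = (A *ᵥ ⇑u) ⬝ᵥ (A *ᵥ ⇑u) := by
      rw [← mulVec_mulVec, dotProduct_mulVec, vecMul_conjTranspose]
      simp
    rw [heig] at h1
    have h2 : ⇑u ⬝ᵥ (hG.eigenvalues i₀ • ⇑u) = hG.eigenvalues i₀ * ∑ j, u j ^ 2 := by
      simp only [dotProduct, Pi.smul_apply, smul_eq_mul, Finset.mul_sum]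
      refine Finset.sum_congr rfl fun i _ => ?_
      ring
    rw [h2, hsum, mul_one] at h1
    rw [h1]
    simp [dotProduct, pow_two]
  refine ⟨⇑u, hsum, fun j => ?_⟩
  have hcoord : (A *ᵥ ⇑u) j ^ 2 ≤ hG.eigenvalues i₀ := by
    rw [← hAv]
    exact Finset.single_le_sum (f := fun i => (A *ᵥ ⇑u) i ^ 2)
      (fun i _ => sq_nonneg _) (Finset.mem_univ j)
  have hdetG : (Aᴴ * A).det = A.det ^ 2 := by
    rw [det_mul, det_conjTranspose]
    simp [pow_two]
  have hprod : hG.eigenvalues i₀ ^ d ≤ A.det ^ 2 := by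
    rw [← hdetG, hG.det_eq_prod_eigenvalues]
    push_cast
    calc hG.eigenvalues i₀ ^ d = ∏ _i : Fin d, hG.eigenvalues i₀ := by
          simp [Finset.prod_const]
      _ ≤ ∏ i, hG.eigenvalues i := Finset.prod_le_prod (fun _ _ => hnn _) (fun i _ => hi₀ i)
  calc ((A *ᵥ ⇑u) j ^ 2) ^ d ≤ hG.eigenvalues i₀ ^ d :=
        pow_le_pow_left₀ (sq_nonneg _) hcoord d
    _ ≤ A.det ^ 2 := hprod

/-- The quotient map onto the ring of Colombeau generalized numbers. -/
noncomputable def mkR : moderateSubring →+* RTilde :=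
  (Ideal.Quotient.mk negligibleIdeal :
    moderateSubring →+* moderateSubring ⧸ negligibleIdeal)

lemma mkR_surjective : Function.Surjective mkR :=
  Ideal.Quotient.mk_surjective

lemma mkR_eq_zero_iff (x : moderateSubring) : mkR x = 0 ↔ Negligible (x : ℝ → ℝ) :=
  Ideal.Quotient.eq_zero_iff_mem

/-- If a moderate net is bounded below by a fixed power of `ε` near `0`, its class in
`ℝ̃` is invertible. -/
lemma isUnit_mkR_of_lower (x : moderateSubring) (m : ℕ) (ε₀ : ℝ) (hε₀ : 0 < ε₀)
    (h : ∀ ε : ℝ, 0 < ε → ε ≤ 1 → ε < ε₀ → ε ^ m ≤ |(x : ℝ → ℝ) ε|) :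
    IsUnit (mkR x) := by
  have hymod : Moderate (fun ε => if 0 < ε ∧ ε ≤ 1 ∧ ε < ε₀ then ((x : ℝ → ℝ) ε)⁻¹ else 0) := by
    refine ⟨m, 1, one_pos, ε₀, hε₀, fun ε hε hε1 hεe => ?_⟩
    have hx := h ε hε hε1 hεe
    simp only [if_pos (show 0 < ε ∧ ε ≤ 1 ∧ ε < ε₀ from ⟨hε, hε1, hεe⟩)]
    rw [abs_inv, one_div]
    exact inv_anti₀ (pow_pos hε m) hx
  set Y : moderateSubring := ⟨_, hymod⟩ with hY
  have hone : x * Y - 1 ∈ negligibleIdeal := by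
    intro m'
    refine ⟨1, one_pos, ε₀, hε₀, fun ε hε hε1 hεe => ?_⟩
    have hx := h ε hε hε1 hεe
    have hxne : (x : ℝ → ℝ) ε ≠ 0 := by
      intro h0
      rw [h0, abs_zero] at hx
      exact absurd hx (not_le.mpr (pow_pos hε m))
    have hval : ((x * Y - 1 : moderateSubring) : ℝ → ℝ) ε = 0 := by
      push_cast
      simp only [Pi.sub_apply, Pi.mul_apply, Pi.one_apply, hY]
      rw [if_pos (show 0 < ε ∧ ε ≤ 1 ∧ ε < ε₀ from ⟨hε, hε1, hεe⟩),
        mul_inv_cancel₀ hxne, sub_self]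
    rw [hval, abs_zero]
    positivity
  have h0 : mkR (x * Y - 1) = 0 := Ideal.Quotient.eq_zero_iff_mem.mpr hone
  rw [map_sub, _root_.map_mul, _root_.map_one, sub_eq_zero] at h0
  exact IsUnit.of_mul_eq_one (mkR Y) h0

lemma exists_small_of_not_isUnit (x : moderateSubring) (hx : ¬ IsUnit (mkR x)) :
    ∀ m : ℕ, ∀ δ : ℝ, 0 < δ → ∃ ε, 0 < ε ∧ ε ≤ 1 ∧ ε < δ ∧ |(x : ℝ → ℝ) ε| < ε ^ m := by
  intro m δ hδ
  by_contra hc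
  push_neg at hc
  exact hx (isUnit_mkR_of_lower x m δ hδ fun ε h1 h2 h3 => hc ε h1 h2 h3)

/-- A square matrix over `ℝ̃` whose determinant is not invertible has a nontrivial
kernel vector. -/
lemma exists_ne_zero_mulVec_eq_zero {d : ℕ} (hd : 0 < d)
    (M : Matrix (Fin d) (Fin d) RTilde) (hdet : ¬ IsUnit M.det) :
    ∃ w : Fin d → RTilde, w ≠ 0 ∧ M.mulVec w = 0 := by
  classical
  have hrep : ∀ i j, ∃ x : moderateSubring, mkR x = M i j := fun i j => mkR_surjective _
  choose N hN using hrep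
  set A : ℝ → Matrix (Fin d) (Fin d) ℝ := fun ε i j => ((N i j : ℝ → ℝ) ε) with hA
  set D : moderateSubring := (Matrix.of N).det with hD
  have hmkD : mkR D = M.det := by
    rw [hD, RingHom.map_det]
    congr 1
    ext i j
    exact hN i j
  have hDval : ∀ ε : ℝ, (D : ℝ → ℝ) ε = (A ε).det := by
    intro ε
    exact RingHom.map_det
      ((Pi.evalRingHom (fun _ : ℝ => ℝ) ε).comp moderateSubring.subtype) (Matrix.of N)
  have hsmall := exists_small_of_not_isUnit D (by rwa [hmkD])
  have H : ∀ m : ℕ, ∀ δ : ℝ, ∃ ε : ℝ,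
      0 < δ → (0 < ε ∧ ε ≤ 1 ∧ ε < δ ∧ |(D : ℝ → ℝ) ε| < ε ^ m) := by
    intro m δ
    by_cases hδ : 0 < δ
    · obtain ⟨ε, h⟩ := hsmall m δ hδ
      exact ⟨ε, fun _ => h⟩
    · exact ⟨1, fun h' => absurd h' hδ⟩
  choose g hg using H
  set seq : ℕ → ℝ :=
    fun k => Nat.rec (g 0 (1 / 2)) (fun n p => g (n + 1) (min p (1 / (n + 2)))) k with hseq
  have hseqS : ∀ k, seq (k + 1) = g (k + 1) (min (seq k) (1 / (k + 2))) := fun k => rfl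
  have hP : ∀ k, 0 < seq k ∧ seq k ≤ 1 ∧ seq k < 1 / (k + 1) ∧
      |(D : ℝ → ℝ) (seq k)| < seq k ^ k := by
    intro k
    induction k with
    | zero =>
      have h := hg 0 (1 / 2) (by norm_num)
      exact ⟨h.1, h.2.1, lt_trans h.2.2.1 (by norm_num), h.2.2.2⟩
    | succ n ih =>
      have hδ : 0 < min (seq n) (1 / ((n : ℝ) + 2)) := lt_min ih.1 (by positivity)
      have h := hg (n + 1) (min (seq n) (1 / ((n : ℝ) + 2))) hδ
      rw [← hseqS n] at h
      refine ⟨h.1, h.2.1, ?_, h.2.2.2⟩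
      calc seq (n + 1) < min (seq n) (1 / ((n : ℝ) + 2)) := h.2.2.1
        _ ≤ 1 / ((n : ℝ) + 2) := min_le_right _ _
        _ = 1 / ((((n : ℕ) + 1 : ℕ) : ℝ) + 1) := by push_cast; ring
  have hdec : StrictAnti seq := by
    refine strictAnti_nat_of_succ_lt fun n => ?_
    have hδ : 0 < min (seq n) (1 / ((n : ℝ) + 2)) := lt_min (hP n).1 (by positivity)
    have h := hg (n + 1) (min (seq n) (1 / ((n : ℝ) + 2))) hδ
    rw [← hseqS n] at h
    exact lt_of_lt_of_le h.2.2.1 (min_le_left _ _)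
  have hinj : Function.Injective seq := hdec.injective
  have hkey := fun k => key_real d hd (A (seq k))
  choose u hu1 hu2 using hkey
  set wnet : Fin d → ℝ → ℝ :=
    fun j ε => if h : ∃ k, seq k = ε then u h.choose j else 0 with hw
  have hwval : ∀ k j, wnet j (seq k) = u k j := by
    intro k j
    have hex : ∃ k', seq k' = seq k := ⟨k, rfl⟩
    simp only [hw, dif_pos hex]
    congr 1
    exact hinj hex.choose_spec
  have hwzero : ∀ j ε, (¬ ∃ k, seq k = ε) → wnet j ε = 0 := by
    intro j ε h
    simp [hw, dif_neg h]
  have hub : ∀ k j, |u k j| ≤ 1 := by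
    intro k j
    have h1 : u k j ^ 2 ≤ 1 := by
      rw [← hu1 k]
      exact Finset.single_le_sum (f := fun i => u k i ^ 2)
        (fun i _ => sq_nonneg _) (Finset.mem_univ j)
    nlinarith [abs_nonneg (u k j), sq_abs (u k j)]
  have hwmod : ∀ j, Moderate (wnet j) := by
    intro j
    refine ⟨0, 1, one_pos, 1, one_pos, fun ε hε hε1 _ => ?_⟩
    rw [pow_zero, div_one]
    by_cases h : ∃ k, seq k = ε
    · obtain ⟨k, hk⟩ := h
      rw [← hk, hwval k j]
      exact hub k j
    · rw [hwzero j ε h, abs_zero]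
      exact zero_le_one
  set W : Fin d → moderateSubring := fun j => ⟨wnet j, hwmod j⟩ with hW
  -- the coordinatewise bound at the points `seq k`
  have hbound : ∀ (k : ℕ) (j : Fin d), |(A (seq k)).mulVec (u k) j| ≤ seq k ^ (k / d) := by
    intro k j
    obtain ⟨hpos, hle1, -, hdetk⟩ := hP k
    have h1 : (((A (seq k)).mulVec (u k) j) ^ 2) ^ d ≤ (A (seq k)).det ^ 2 := hu2 k j
    have h2 : (A (seq k)).det ^ 2 < (seq k ^ k) ^ 2 := by
      rw [← sq_abs ((A (seq k)).det), ← hDval (seq k)]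
      exact pow_lt_pow_left₀ hdetk (abs_nonneg _) two_ne_zero
    have h3 : (seq k ^ k) ^ 2 ≤ ((seq k ^ (k / d)) ^ 2) ^ d := by
      rw [← pow_mul, ← pow_mul, ← pow_mul]
      refine pow_le_pow_of_le_one hpos.le hle1 ?_
      have h6 : k / d * d ≤ k := Nat.div_mul_le_self k d
      calc k / d * (2 * d) = k / d * d * 2 := by ring
        _ ≤ k * 2 := Nat.mul_le_mul_right 2 h6
    have h4 : ((A (seq k)).mulVec (u k) j) ^ 2 ≤ (seq k ^ (k / d)) ^ 2 :=
      le_of_pow_le_pow_left₀ hd.ne' (sq_nonneg _) (le_trans h1 (le_trans h2.le h3))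
    have h5 : |(A (seq k)).mulVec (u k) j| ^ 2 ≤ (seq k ^ (k / d)) ^ 2 := by
      rwa [sq_abs]
    exact le_of_pow_le_pow_left₀ two_ne_zero (by positivity) h5
  refine ⟨fun j => mkR (W j), ?_, ?_⟩
  · -- nonzero
    intro h0
    have hneg : ∀ j, Negligible (wnet j) := by
      intro j
      have := congrFun h0 j
      exact (mkR_eq_zero_iff (W j)).mp this
    choose C hC δ hδ hb using fun j => hneg j 1
    haveI : Nonempty (Fin d) := ⟨⟨0, hd⟩⟩
    obtain ⟨j₀, hj₀⟩ := Finite.exists_min δ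
    set B : ℝ := ∑ j, C j ^ 2 with hB
    have hBpos : 0 < B := Finset.sum_pos (fun j _ => pow_pos (hC j) 2) ⟨j₀, Finset.mem_univ _⟩
    set c : ℝ := min (δ j₀) B⁻¹ with hc
    have hcpos : 0 < c := lt_min (hδ j₀) (by positivity)
    obtain ⟨k, hk⟩ := exists_nat_gt (1 / c)
    have hk1 : (1 : ℝ) / (k + 1) < c := by
      rw [div_lt_iff₀ (by positivity)]
      rw [div_lt_iff₀ hcpos] at hk
      nlinarith
    have hskc : seq k < c := lt_trans (hP k).2.2.1 hk1
    have hsk1 : seq k < 1 := lt_of_lt_of_le (hP k).2.2.1 (by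
      rw [div_le_one (by positivity)]
      have : (0:ℝ) ≤ (k:ℝ) := Nat.cast_nonneg k
      linarith)
    have hterm : ∀ j, u k j ^ 2 ≤ (C j * seq k) ^ 2 := by
      intro j
      have hlt : seq k < δ j := lt_of_lt_of_le hskc (le_trans (min_le_left _ _) (hj₀ j))
      have hbj := hb j (seq k) (hP k).1 (hP k).2.1 hlt
      rw [pow_one] at hbj
      have : |u k j| ≤ C j * seq k := by rwa [← hwval k j]
      calc u k j ^ 2 = |u k j| ^ 2 := (sq_abs _).symm
        _ ≤ (C j * seq k) ^ 2 := pow_le_pow_left₀ (abs_nonneg _) this 2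
    have hsum1 : (1 : ℝ) ≤ B * seq k ^ 2 := by
      rw [← hu1 k, hB, Finset.sum_mul]
      refine Finset.sum_le_sum fun j _ => ?_
      calc u k j ^ 2 ≤ (C j * seq k) ^ 2 := hterm j
        _ = C j ^ 2 * seq k ^ 2 := by ring
    have hBsk : B * seq k ^ 2 < 1 := by
      have h1 : seq k < B⁻¹ := lt_of_lt_of_le hskc (min_le_right _ _)
      have h2 : B * seq k < 1 := by
        have := mul_lt_mul_of_pos_left h1 hBpos
        rwa [mul_inv_cancel₀ (ne_of_gt hBpos)] at this
      have h3 : 0 < seq k := (hP k).1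
      nlinarith
    linarith
  · -- the kernel equation
    funext j
    have hMij : ∀ i, M j i = mkR (N j i) := fun i => (hN j i).symm
    have hstep : M.mulVec (fun i => mkR (W i)) j = mkR (∑ i, N j i * W i) := by
      simp only [Matrix.mulVec, dotProduct, map_sum, _root_.map_mul]
      exact Finset.sum_congr rfl fun i _ => by rw [hMij i]
    rw [hstep, Pi.zero_apply, mkR_eq_zero_iff]
    have hval : ∀ ε : ℝ, ((∑ i, N j i * W i : moderateSubring) : ℝ → ℝ) ε
        = ∑ i, (N j i : ℝ → ℝ) ε * wnet i ε := by
      intro ε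
      simp only [AddSubmonoidClass.coe_finset_sum, Finset.sum_apply, MulMemClass.coe_mul,
        Pi.mul_apply, hW]
    intro m
    refine ⟨1, one_pos, seq (d * (m + 1)), (hP _).1, fun ε hε hε1 hεe => ?_⟩
    rw [hval]
    by_cases hex : ∃ k, seq k = ε
    · obtain ⟨k, hk⟩ := hex
      subst hk
      have hkgt : d * (m + 1) < k := (hdec.lt_iff_gt).mp hεe
      have hq : m + 1 ≤ k / d := by
        rw [Nat.le_div_iff_mul_le hd]
        calc (m + 1) * d = d * (m + 1) := Nat.mul_comm _ _
          _ ≤ k := hkgt.le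
      have hv : ∑ i, (N j i : ℝ → ℝ) (seq k) * wnet i (seq k)
          = (A (seq k)).mulVec (u k) j := by
        simp only [Matrix.mulVec, dotProduct]
        exact Finset.sum_congr rfl fun i _ => by rw [hwval k i]
      rw [hv]
      calc |(A (seq k)).mulVec (u k) j| ≤ seq k ^ (k / d) := hbound k j
        _ ≤ seq k ^ (m + 1) := pow_le_pow_of_le_one (hP k).1.le (hP k).2.1 hq
        _ ≤ 1 * seq k ^ m := by
            rw [one_mul, pow_succ]
            have h1 : (0:ℝ) ≤ seq k ^ m := pow_nonneg (hP k).1.le m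
            nlinarith [(hP k).2.1]
    · have hz : ∀ i, wnet i ε = 0 := fun i => hwzero i ε hex
      simp only [hz, mul_zero, Finset.sum_const_zero, abs_zero, one_mul]
      positivity

end Colombeau


namespace Colombeau

/-- A symplectic map between free symplectic `ℝ̃`-modules of equal finite rank is a
symplectomorphism, i.e. an `ℝ̃`-linear isomorphism preserving the symplectic forms. -/
theorem symplectic_map_bijective_of_equal_rank {V₁ V₂ : Type*}
    [AddCommGroup V₁] [Module RTilde V₁] [AddCommGroup V₂] [Module RTilde V₂]
    (d : ℕ) (b₁ : Module.Basis (Fin d) RTilde V₁) (b₂ : Module.Basis (Fin d) RTilde V₂)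
    (σ₁ : V₁ →ₗ[RTilde] V₁ →ₗ[RTilde] RTilde) (hσ₁ : IsSymplecticForm σ₁)
    (σ₂ : V₂ →ₗ[RTilde] V₂ →ₗ[RTilde] RTilde) (hσ₂ : IsSymplecticForm σ₂)
    (f : V₁ →ₗ[RTilde] V₂) (hf : ∀ v w : V₁, σ₂ (f v) (f w) = σ₁ v w) :
    Function.Bijective f := by
  classical
  have hinj : Function.Injective f := by
    intro v w hvw
    have h0 : f (v - w) = 0 := by rw [map_sub, hvw, sub_self]
    have hz : v - w = 0 := by
      apply hσ₁.nondeg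
      intro z
      rw [← hf (v - w) z, h0, map_zero, LinearMap.zero_apply]
    exact sub_eq_zero.mp hz
  have hdet : IsUnit (LinearMap.toMatrix b₁ b₂ f).det := by
    rcases Nat.eq_zero_or_pos d with hd | hd
    · subst hd
      rw [Matrix.det_isEmpty]
      exact isUnit_one
    · by_contra hdet
      obtain ⟨w, hw0, hwv⟩ :=
        exists_ne_zero_mulVec_eq_zero hd (LinearMap.toMatrix b₁ b₂ f) hdet
      set v := b₁.equivFun.symm w with hv
      have hrepr : ⇑(b₁.repr v) = w := by
        rw [← Module.Basis.equivFun_apply, hv, LinearEquiv.apply_symm_apply]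
      have hfv : f v = 0 := by
        have h := LinearMap.toMatrix_mulVec_repr b₁ b₂ f v
        rw [hrepr, hwv] at h
        have h2 : b₂.repr (f v) = 0 := Finsupp.coe_eq_zero.mp h.symm
        exact (LinearEquiv.map_eq_zero_iff _).mp h2
      have hv0 : v = 0 := hinj (by rw [hfv, map_zero])
      apply hw0
      rw [← hrepr, hv0]
      simp
  have hbij := (LinearEquiv.ofIsUnitDet hdet).bijective
  have hco : ⇑(LinearEquiv.ofIsUnitDet hdet) = ⇑f := by
    ext x
    rfl
  rwa [hco] at hbij

end Colombeau
end

section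
/- Every free symplectic $\widetilde{\mathbb{R}}$-module $(V,\sigma)$ of finite rank $2n$ is symplectomorphic to the standard model $(T^*(\widetilde{\mathbb{R}}^n),\widetilde{\omega})$, i.e., there exists an $\widetilde{\mathbb{R}}$-linear isomorphism $f:V\to\widetilde{\mathbb{R}}^n\times\widetilde{\mathbb{R}}^n$ with $\widetilde{\omega}(f(v_1),f(v_2))=\sigma(v_1,v_2)$ for all $v_1,v_2\in V$. -/
open scoped BigOperators

namespace Colombeau

open scoped Classical

noncomputable def mkQ : moderateSubring →+* RTilde := Ideal.Quotient.mk negligibleIdeal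

lemma mkQ_surjective : Function.Surjective mkQ := Ideal.Quotient.mk_surjective

lemma mkQ_eq_zero {r : moderateSubring} : mkQ r = 0 ↔ Negligible (r : ℝ → ℝ) :=
  Ideal.Quotient.eq_zero_iff_mem

lemma mkQ_eq {a b : moderateSubring} : mkQ a = mkQ b ↔ Negligible ((a - b : moderateSubring) : ℝ → ℝ) :=
  Ideal.Quotient.eq

/-- A net is *strictly nonzero* if `|r ε| ≥ ε^N` for small `ε`. -/
def SNZ (r : ℝ → ℝ) : Prop :=
  ∃ N : ℕ, ∃ ε₀ : ℝ, 0 < ε₀ ∧ ∀ ε : ℝ, 0 < ε → ε ≤ 1 → ε < ε₀ → ε ^ N ≤ |r ε|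

lemma isUnit_of_snz (r : moderateSubring) (h : SNZ (r : ℝ → ℝ)) : IsUnit (mkQ r) := by
  obtain ⟨N, ε₀, hε₀, hb⟩ := h
  have hsmem : Moderate (fun ε => if 0 < ε ∧ ε ≤ 1 ∧ ε < ε₀ then ((r : ℝ → ℝ) ε)⁻¹ else 0) := by
    refine ⟨N, 1, one_pos, ε₀, hε₀, fun ε hε hε1 hεe => ?_⟩
    show |if 0 < ε ∧ ε ≤ 1 ∧ ε < ε₀ then ((r : ℝ → ℝ) ε)⁻¹ else 0| ≤ 1 / ε ^ N
    rw [if_pos ⟨hε, hε1, hεe⟩, abs_inv, one_div]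
    exact inv_anti₀ (pow_pos hε _) (hb ε hε hε1 hεe)
  refine IsUnit.of_mul_eq_one (mkQ ⟨_, hsmem⟩) ?_
  rw [← map_mul, show (1 : RTilde) = mkQ 1 from (map_one mkQ).symm, mkQ_eq]
  intro m
  refine ⟨1, one_pos, ε₀, hε₀, fun ε hε hε1 hεe => ?_⟩
  have hrne : (r : ℝ → ℝ) ε ≠ 0 := by
    have h2 : (0:ℝ) < |(r : ℝ → ℝ) ε| := lt_of_lt_of_le (pow_pos hε N) (hb ε hε hε1 hεe)
    exact abs_pos.mp h2
  have hz : ((r * ⟨_, hsmem⟩ - 1 : moderateSubring) : ℝ → ℝ) ε = 0 := by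
    push_cast
    simp only [Pi.sub_apply, Pi.mul_apply, Pi.one_apply]
    rw [if_pos ⟨hε, hε1, hεe⟩, mul_inv_cancel₀ hrne, sub_self]
  rw [hz, abs_zero]
  positivity

lemma snz_of_isUnit (r : moderateSubring) (h : IsUnit (mkQ r)) : SNZ (r : ℝ → ℝ) := by
  obtain ⟨u, hu⟩ := h
  obtain ⟨t, ht⟩ := mkQ_surjective (↑u⁻¹)
  have hmul : mkQ (r * t) = 1 := by
    rw [map_mul, ← hu, ht]; exact u.mul_inv
  have hneg : Negligible ((r * t - 1 : moderateSubring) : ℝ → ℝ) := by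
    have : mkQ (r * t) = mkQ 1 := by rw [hmul, map_one]
    exact mkQ_eq.mp this
  obtain ⟨C, hC, ε₁, hε₁, h1⟩ := hneg 1
  obtain ⟨M, C₂, hC₂, ε₂, hε₂, h2⟩ := t.2
  refine ⟨M + 1, min (min ε₁ ε₂) (min (1 / (2 * C)) (1 / (2 * C₂))), by positivity,
    fun ε hε hε1 hεe => ?_⟩
  have hεε₁ : ε < ε₁ := lt_of_lt_of_le hεe ((min_le_left _ _).trans (min_le_left _ _))
  have hεε₂ : ε < ε₂ := lt_of_lt_of_le hεe ((min_le_left _ _).trans (min_le_right _ _))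
  have hεC : ε < 1 / (2 * C) := lt_of_lt_of_le hεe ((min_le_right _ _).trans (min_le_left _ _))
  have hεC₂ : ε < 1 / (2 * C₂) := lt_of_lt_of_le hεe ((min_le_right _ _).trans (min_le_right _ _))
  have k1 := h1 ε hε hε1 hεε₁
  have k2 := h2 ε hε hε1 hεε₂
  have hsub : ((r * t - 1 : moderateSubring) : ℝ → ℝ) ε
      = (r : ℝ → ℝ) ε * (t : ℝ → ℝ) ε - 1 := by push_cast; simp
  rw [hsub] at k1
  have hrt : (1:ℝ)/2 ≤ |(r : ℝ → ℝ) ε * (t : ℝ → ℝ) ε| := by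
    have h3 : |(r : ℝ → ℝ) ε * (t : ℝ → ℝ) ε| ≥ 1 - |(r : ℝ → ℝ) ε * (t : ℝ → ℝ) ε - 1| := by
      have := abs_sub_abs_le_abs_sub (1:ℝ) ((r : ℝ → ℝ) ε * (t : ℝ → ℝ) ε)
      rw [abs_one, abs_sub_comm] at this
      linarith
    have hCε : C * ε ^ 1 ≤ 1/2 := by
      rw [pow_one]
      rw [lt_div_iff₀ (by positivity)] at hεC
      nlinarith
    linarith
  have htpos : 0 < |(t : ℝ → ℝ) ε| := by
    rcases eq_or_lt_of_le (abs_nonneg ((t : ℝ → ℝ) ε)) with h' | h'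
    · exfalso; rw [abs_mul, ← h', mul_zero] at hrt; linarith
    · exact h'
  have hεM : (0:ℝ) < ε ^ M := pow_pos hε _
  have hrabs : 1 / (2 * |(t : ℝ → ℝ) ε|) ≤ |(r : ℝ → ℝ) ε| := by
    rw [div_le_iff₀ (by positivity)]
    rw [abs_mul] at hrt
    nlinarith
  have htC : |(t : ℝ → ℝ) ε| * ε ^ M ≤ C₂ := (le_div_iff₀ hεM).mp k2
  have hmid : ε ^ M / (2 * C₂) ≤ 1 / (2 * |(t : ℝ → ℝ) ε|) := by
    rw [div_le_div_iff₀ (by positivity) (by positivity)]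
    nlinarith
  calc ε ^ (M + 1) = ε ^ M * ε := by ring
  _ ≤ ε ^ M * (1 / (2 * C₂)) := mul_le_mul_of_nonneg_left hεC₂.le (by positivity)
  _ = ε ^ M / (2 * C₂) := by ring
  _ ≤ 1 / (2 * |(t : ℝ → ℝ) ε|) := hmid
  _ ≤ |(r : ℝ → ℝ) ε| := hrabs

end Colombeau
namespace Colombeau

open scoped Classical

lemma not_snz_seq (r : moderateSubring) (h : ¬ SNZ (r : ℝ → ℝ)) :
    ∃ seq : ℕ → ℝ, ∀ k : ℕ, 0 < seq k ∧ seq k ≤ 1 ∧ seq k < 1 / (k + 1) ∧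
      |(r : ℝ → ℝ) (seq k)| < (seq k) ^ k := by
  have H : ∀ k : ℕ, ∃ ε : ℝ, 0 < ε ∧ ε ≤ 1 ∧ ε < 1 / (k + 1) ∧ |(r : ℝ → ℝ) ε| < ε ^ k := by
    intro k
    by_contra h'
    push_neg at h'
    exact h ⟨k, 1 / (k + 1), by positivity, fun ε hε hε1 hεe => h' ε hε hε1 hεe⟩
  exact ⟨fun k => (H k).choose, fun k => (H k).choose_spec⟩

/-- From a non-strictly-nonzero net, an idempotent-like net which is nonzero
in `RTilde` yet kills every net dominated (in square) by `r`. -/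
lemma exists_killing (r : moderateSubring) (h : ¬ SNZ (r : ℝ → ℝ)) :
    ∃ e : moderateSubring, mkQ e ≠ 0 ∧
      ∀ s : moderateSubring,
        (∀ ε : ℝ, 0 < ε → ε ≤ 1 → ((s : ℝ → ℝ) ε) ^ 2 ≤ (r : ℝ → ℝ) ε) →
        mkQ e * mkQ s = 0 := by
  obtain ⟨seq, hseq⟩ := not_snz_seq r h
  have hmem : Moderate (fun ε => if ε ∈ Set.range seq then (1:ℝ) else 0) := by
    refine ⟨0, 1, one_pos, 1, one_pos, fun ε hε hε1 _ => ?_⟩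
    show |if ε ∈ Set.range seq then (1:ℝ) else 0| ≤ 1 / ε ^ 0
    rw [pow_zero]
    split <;> simp
  refine ⟨⟨_, hmem⟩, ?_, ?_⟩
  · -- nonzero
    rw [Ne, mkQ_eq_zero]
    intro hneg
    obtain ⟨C, hC, ε₁, hε₁, h1⟩ := hneg 1
    obtain ⟨k, hk⟩ := exists_nat_gt (max (1 / ε₁) (2 * C))
    have hk1 : 1 / (k + 1 : ℝ) < ε₁ := by
      rw [div_lt_iff₀ (by positivity)]
      have h2 : 1 / ε₁ < (k:ℝ) := lt_of_le_of_lt (le_max_left _ _) hk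
      rw [div_lt_iff₀ hε₁] at h2
      nlinarith
    obtain ⟨hp, h1', hlt, _⟩ := hseq k
    have hεk : seq k < ε₁ := lt_trans hlt hk1
    have := h1 (seq k) hp h1' hεk
    have hval : |if seq k ∈ Set.range seq then (1:ℝ) else 0| = 1 := by
      rw [if_pos ⟨k, rfl⟩, abs_one]
    rw [hval, pow_one] at this
    have h2C : 2 * C < (k:ℝ) := lt_of_le_of_lt (le_max_right _ _) hk
    have : C * seq k < C * (1 / (k+1:ℝ)) := by
      apply mul_lt_mul_of_pos_left hlt hC
    have hfin : C * (1 / (k+1:ℝ)) < 1 := by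
      rw [mul_one_div, div_lt_one (by positivity)]
      nlinarith
    linarith [h1 (seq k) hp h1' hεk]
  · intro s hs
    rw [← map_mul, mkQ_eq_zero]
    intro m
    -- threshold: min of seq k for k ≤ 2m
    set F : Finset ℕ := Finset.range (2 * m + 1) with hF
    have hFne : F.Nonempty := ⟨0, by simp [hF]⟩
    set δ : ℝ := F.inf' hFne seq with hδ
    have hδpos : 0 < δ := by
      rw [hδ, Finset.lt_inf'_iff]
      intro k _
      exact (hseq k).1
    refine ⟨1, one_pos, δ, hδpos, fun ε hε hε1 hεe => ?_⟩
    have hcoe : ((⟨_, hmem⟩ * s : moderateSubring) : ℝ → ℝ) ε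
        = (if ε ∈ Set.range seq then (1:ℝ) else 0) * (s : ℝ → ℝ) ε := rfl
    rw [hcoe]
    by_cases hmemε : ε ∈ Set.range seq
    · rw [if_pos hmemε, one_mul]
      obtain ⟨k, hk⟩ := hmemε
      have hklarge : 2 * m + 1 ≤ k := by
        by_contra hklt
        push_neg at hklt
        have : δ ≤ seq k := Finset.inf'_le _ (by simp [hF]; omega)
        rw [hk] at this
        linarith
      have hb := (hseq k).2.2.2
      rw [hk] at hb
      have hs2 : ((s : ℝ → ℝ) ε) ^ 2 ≤ (r : ℝ → ℝ) ε := hs ε hε hε1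
      have hr : (r : ℝ → ℝ) ε < ε ^ k := lt_of_le_of_lt (le_abs_self _) hb
      have hεk : ε ^ k ≤ ε ^ (2 * m) :=
        pow_le_pow_of_le_one hε.le hε1 (by omega)
      have : ((s : ℝ → ℝ) ε) ^ 2 ≤ (ε ^ m) ^ 2 := by
        have : (ε ^ m) ^ 2 = ε ^ (2 * m) := by ring
        rw [this]
        linarith
      have habs : |(s : ℝ → ℝ) ε| ≤ ε ^ m := by
        have h4 := abs_le_of_sq_le_sq' this (by positivity : (0:ℝ) ≤ ε ^ m)
        exact abs_le.mpr ⟨h4.1, h4.2⟩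
      calc |(s : ℝ → ℝ) ε| ≤ ε ^ m := habs
      _ = 1 * ε ^ m := (one_mul _).symm
    · rw [if_neg hmemε, zero_mul, abs_zero]
      positivity

end Colombeau
namespace Colombeau

lemma eq_zero_of_eq_neg {x : RTilde} (h : x = -x) : x = 0 := by
  obtain ⟨r, rfl⟩ := mkQ_surjective x
  have h2 : mkQ (r + r) = 0 := by
    rw [map_add]
    nth_rewrite 1 [h]
    exact neg_add_cancel _
  rw [mkQ_eq_zero] at h2 ⊢
  intro m
  obtain ⟨C, hC, ε₀, hε₀, hb⟩ := h2 m
  refine ⟨C, hC, ε₀, hε₀, fun ε hε hε1 hεe => ?_⟩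
  have hcoe : ((r + r : moderateSubring) : ℝ → ℝ) ε = (r : ℝ → ℝ) ε + (r : ℝ → ℝ) ε := rfl
  have h3 := hb ε hε hε1 hεe
  rw [hcoe] at h3
  have : |(r : ℝ → ℝ) ε + (r : ℝ → ℝ) ε| = 2 * |(r : ℝ → ℝ) ε| := by
    rw [← two_mul, abs_mul]
    norm_num
  rw [this] at h3
  linarith [abs_nonneg ((r : ℝ → ℝ) ε), mul_pos hC (pow_pos hε m)]

lemma sum_sq_isUnit {V : Type*} [AddCommGroup V] [Module RTilde V] {m : ℕ}
    (b : Module.Basis (Fin m) RTilde V) (σ : V →ₗ[RTilde] V →ₗ[RTilde] RTilde)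
    (hnd : ∀ v : V, (∀ w : V, σ v w = 0) → v = 0) (i₀ : Fin m) :
    IsUnit (∑ j, σ (b i₀) (b j) ^ 2) := by
  choose ρ hρ using fun j => mkQ_surjective (σ (b i₀) (b j))
  set r : moderateSubring := ∑ j, (ρ j) ^ 2 with hr
  have hmkr : mkQ r = ∑ j, σ (b i₀) (b j) ^ 2 := by
    rw [hr, map_sum]
    exact Finset.sum_congr rfl fun j _ => by rw [map_pow, hρ]
  by_cases hsnz : SNZ (r : ℝ → ℝ)
  · rw [← hmkr]
    exact isUnit_of_snz r hsnz
  · exfalso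
    obtain ⟨e, hene, hkill⟩ := exists_killing r hsnz
    have hkj : ∀ j, mkQ e * σ (b i₀) (b j) = 0 := by
      intro j
      rw [← hρ j]
      apply hkill
      intro ε hε hε1
      have hcoe : (r : ℝ → ℝ) ε = ∑ j, ((ρ j : ℝ → ℝ) ε) ^ 2 := by
        rw [hr]
        push_cast
        simp [Finset.sum_apply]
      rw [hcoe]
      exact Finset.single_le_sum (f := fun i => ((ρ i : ℝ → ℝ) ε) ^ 2) (fun i _ => sq_nonneg _) (Finset.mem_univ j)
    have hv : mkQ e • b i₀ = 0 := by
      apply hnd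
      intro w
      have hexp : σ (b i₀) w = ∑ j, b.repr w j * σ (b i₀) (b j) := by
        conv_lhs => rw [← Module.Basis.sum_repr b w]
        rw [map_sum]
        exact Finset.sum_congr rfl fun j _ => by rw [map_smul, smul_eq_mul]
      rw [map_smul, LinearMap.smul_apply, smul_eq_mul, hexp, Finset.mul_sum]
      refine Finset.sum_eq_zero fun j _ => ?_
      rw [mul_left_comm, hkj j, mul_zero]
    have h5 := congrArg (fun v => b.repr v i₀) hv
    simp only [map_smul, Finsupp.smul_apply, Module.Basis.repr_self, map_zero,
      Finsupp.coe_zero, Pi.zero_apply, Finsupp.single_eq_same, smul_eq_mul, mul_one] at h5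
    exact hene h5

end Colombeau
namespace Colombeau

open scoped Classical

lemma mkQ_eq_of_eventually_eq (a b : moderateSubring) (ε₀ : ℝ) (h : 0 < ε₀)
    (hab : ∀ ε : ℝ, 0 < ε → ε ≤ 1 → ε < ε₀ → (a : ℝ → ℝ) ε = (b : ℝ → ℝ) ε) :
    mkQ a = mkQ b := by
  rw [mkQ_eq]
  intro m
  refine ⟨1, one_pos, ε₀, h, fun ε hε hε1 hεe => ?_⟩
  have : ((a - b : moderateSubring) : ℝ → ℝ) ε = (a : ℝ → ℝ) ε - (b : ℝ → ℝ) ε := rfl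
  rw [this, hab ε hε hε1 hεe, sub_self, abs_zero]
  positivity

/-- Completion of a coordinate vector `d` with `d 0 = 0` and `∑ d² ` a unit to an
invertible matrix whose column `0` is `e₀` and column `1` is `d`. -/
lemma completion {m : ℕ} (d : Fin (m + 2) → RTilde) (hd0 : d 0 = 0)
    (hunit : IsUnit (∑ j, d j ^ 2)) :
    ∃ P : Matrix (Fin (m + 2)) (Fin (m + 2)) RTilde, IsUnit P.det ∧
      (∀ i, P i 0 = if i = 0 then 1 else 0) ∧ (∀ i, P i 1 = d i) := by
  -- choose representatives, with the 0-th identically zero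
  choose ρ' hρ' using fun j => mkQ_surjective (d j)
  set ρ : Fin (m + 2) → moderateSubring := Function.update ρ' 0 0 with hρdef
  have hρ : ∀ j, mkQ (ρ j) = d j := by
    intro j
    by_cases hj : j = 0
    · subst hj
      rw [hρdef, Function.update_self, map_zero, hd0]
    · rw [hρdef, Function.update_of_ne hj, hρ']
  have hρ0 : ∀ ε : ℝ, (ρ 0 : ℝ → ℝ) ε = 0 := by
    intro ε
    rw [hρdef, Function.update_self]
    rfl
  set r : moderateSubring := ∑ j, (ρ j) ^ 2 with hr
  have hrcoe : ∀ ε : ℝ, (r : ℝ → ℝ) ε = ∑ j, ((ρ j : ℝ → ℝ) ε) ^ 2 := by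
    intro ε
    rw [hr]
    push_cast
    simp [Finset.sum_apply]
  have hmkr : mkQ r = ∑ j, d j ^ 2 := by
    rw [hr, map_sum]
    exact Finset.sum_congr rfl fun j _ => by rw [map_pow, hρ]
  obtain ⟨N, ε₀, hε₀, hsnzb⟩ := snz_of_isUnit r (by rw [hmkr]; exact hunit)
  -- the pivot index
  have hex : ∀ ε : ℝ, ∃ i : Fin (m + 2), ∀ i', |(ρ i' : ℝ → ℝ) ε| ≤ |(ρ i : ℝ → ℝ) ε| :=
    fun ε => Finite.exists_max _
  choose jmax hjmax using hex
  set ε₁ : ℝ := min ε₀ (1 / (m + 2)) with hε₁def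
  have hε₁pos : 0 < ε₁ := by positivity
  have key : ∀ ε : ℝ, 0 < ε → ε ≤ 1 → ε < ε₁ →
      ε ^ (N + 1) ≤ |(ρ (jmax ε) : ℝ → ℝ) ε| ∧ jmax ε ≠ 0 := by
    intro ε hε hε1 hεe
    have hεe₀ : ε < ε₀ := lt_of_lt_of_le hεe (min_le_left _ _)
    have hεm : ε < 1 / (m + 2) := lt_of_lt_of_le hεe (min_le_right _ _)
    have hrn : (0:ℝ) ≤ (r : ℝ → ℝ) ε := by
      rw [hrcoe]
      positivity
    have h1 : ε ^ N ≤ (r : ℝ → ℝ) ε := by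
      have := hsnzb ε hε hε1 hεe₀
      rwa [abs_of_nonneg hrn] at this
    set max2 : ℝ := ((ρ (jmax ε) : ℝ → ℝ) ε) ^ 2 with hmax2
    have h2 : (r : ℝ → ℝ) ε ≤ (m + 2 : ℝ) * max2 := by
      rw [hrcoe]
      have hb : ∀ j : Fin (m + 2), ((ρ j : ℝ → ℝ) ε) ^ 2 ≤ max2 := by
        intro j
        rw [hmax2, ← sq_abs ((ρ j : ℝ → ℝ) ε), ← sq_abs ((ρ (jmax ε) : ℝ → ℝ) ε)]
        exact pow_le_pow_left₀ (abs_nonneg _) (hjmax ε j) 2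
      calc ∑ j, ((ρ j : ℝ → ℝ) ε) ^ 2 ≤ ∑ _j : Fin (m + 2), max2 :=
            Finset.sum_le_sum fun j _ => hb j
      _ = (m + 2 : ℝ) * max2 := by
            rw [Finset.sum_const, Finset.card_univ, Fintype.card_fin, nsmul_eq_mul]
            push_cast
            ring
    have hmax2nn : (0:ℝ) ≤ max2 := sq_nonneg _
    have hεN : (0:ℝ) ≤ ε ^ N := pow_nonneg hε.le _
    have hεm2 : ε * (m + 2 : ℝ) ≤ 1 := by
      have h3 : (0:ℝ) < (m:ℝ) + 2 := by positivity
      rw [lt_div_iff₀ h3] at hεm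
      linarith
    have hεpow : ε ^ (N + 2) ≤ ε := by
      calc ε ^ (N + 2) ≤ ε ^ 1 := pow_le_pow_of_le_one hε.le hε1 (by omega)
      _ = ε := pow_one ε
    have hsq : (ε ^ (N + 1)) ^ 2 ≤ max2 := by
      calc (ε ^ (N + 1)) ^ 2 = ε ^ (N + 2) * ε ^ N := by ring
      _ ≤ ε * ε ^ N := mul_le_mul_of_nonneg_right hεpow hεN
      _ ≤ max2 := by nlinarith [mul_le_mul_of_nonneg_left (h1.trans h2) hε.le]
    have habs : ε ^ (N + 1) ≤ |(ρ (jmax ε) : ℝ → ℝ) ε| := by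
      have hsq' : (ε ^ (N + 1)) ^ 2 ≤ |(ρ (jmax ε) : ℝ → ℝ) ε| ^ 2 := by
        rwa [sq_abs]
      exact (abs_le_of_sq_le_sq' hsq' (abs_nonneg _)).2
    refine ⟨habs, fun h0 => ?_⟩
    rw [h0, hρ0] at habs
    rw [abs_zero] at habs
    have : (0:ℝ) < ε ^ (N + 1) := pow_pos hε _
    linarith
  -- the net-level matrix
  set Fmat : ℝ → Matrix (Fin (m + 2)) (Fin (m + 2)) ℝ := fun ε =>
    ((1 : Matrix (Fin (m + 2)) (Fin (m + 2)) ℝ).updateCol (jmax ε)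
      (fun i => (ρ i : ℝ → ℝ) ε)).submatrix id (Equiv.swap 1 (jmax ε)) with hFmat
  have hFapply : ∀ (ε : ℝ) i k, Fmat ε i k =
      if Equiv.swap (1 : Fin (m+2)) (jmax ε) k = jmax ε then (ρ i : ℝ → ℝ) ε
      else if i = Equiv.swap (1 : Fin (m+2)) (jmax ε) k then 1 else 0 := by
    intro ε i k
    rw [hFmat]
    simp only [Matrix.submatrix_apply, Matrix.updateCol_apply, id_eq, Matrix.one_apply]
  have hmod : ∀ i k : Fin (m + 2), Moderate (fun ε => Fmat ε i k) := by
    intro i k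
    obtain ⟨Ni, Ci, hCi, εi, hεi, hi⟩ := (ρ i).2
    refine ⟨Ni, Ci + 1, by positivity, εi, hεi, fun ε hε hε1 hεe => ?_⟩
    have hb : |Fmat ε i k| ≤ 1 + |(ρ i : ℝ → ℝ) ε| := by
      rw [hFapply]
      split
      · linarith [le_refl |(ρ i : ℝ → ℝ) ε|, abs_nonneg ((ρ i : ℝ → ℝ) ε)]
      · split
        · rw [abs_one]; linarith [abs_nonneg ((ρ i : ℝ → ℝ) ε)]
        · rw [abs_zero]; positivity
    have h1ε : (1:ℝ) ≤ 1 / ε ^ Ni := by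
      rw [le_div_iff₀ (pow_pos hε _), one_mul]
      exact pow_le_one₀ hε.le hε1
    calc |Fmat ε i k| ≤ 1 + |(ρ i : ℝ → ℝ) ε| := hb
    _ ≤ 1 / ε ^ Ni + Ci / ε ^ Ni := add_le_add h1ε (hi ε hε hε1 hεe)
    _ = (Ci + 1) / ε ^ Ni := by rw [← add_div]; ring_nf
  set Psub : Matrix (Fin (m + 2)) (Fin (m + 2)) moderateSubring :=
    fun i k => ⟨fun ε => Fmat ε i k, hmod i k⟩ with hPsub
  have hdetnet : ∀ ε : ℝ, ((Psub.det : moderateSubring) : ℝ → ℝ) ε = (Fmat ε).det := by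
    intro ε
    have h1 := RingHom.map_det (SubringClass.subtype moderateSubring) Psub
    have h2 := RingHom.map_det (Pi.evalRingHom (fun _ : ℝ => ℝ) ε)
      ((SubringClass.subtype moderateSubring).mapMatrix Psub)
    calc ((Psub.det : moderateSubring) : ℝ → ℝ) ε
        = ((SubringClass.subtype moderateSubring).mapMatrix Psub).det ε := by rw [← h1]; rfl
    _ = ((Pi.evalRingHom (fun _ : ℝ => ℝ) ε).mapMatrix
          ((SubringClass.subtype moderateSubring).mapMatrix Psub)).det := h2
    _ = (Fmat ε).det := by congr 1
  have hdetval : ∀ ε : ℝ, (Fmat ε).det =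
      ((Equiv.Perm.sign (Equiv.swap (1 : Fin (m+2)) (jmax ε)) : ℤ) : ℝ) *
        (ρ (jmax ε) : ℝ → ℝ) ε := by
    intro ε
    rw [hFmat]
    rw [Matrix.det_permute']
    congr 1
    rw [← Matrix.cramer_apply, Matrix.cramer_one]
    rfl
  have hdetabs : ∀ ε : ℝ, |(Fmat ε).det| = |(ρ (jmax ε) : ℝ → ℝ) ε| := by
    intro ε
    rw [hdetval, abs_mul]
    rcases Int.units_eq_one_or (Equiv.Perm.sign (Equiv.swap (1 : Fin (m+2)) (jmax ε))) with h | h <;>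
      rw [h] <;> norm_num
  refine ⟨Psub.map mkQ, ?_, ?_, ?_⟩
  · -- IsUnit det
    have : (Psub.map mkQ).det = mkQ Psub.det := by
      rw [RingHom.map_det]
      rfl
    rw [this]
    apply isUnit_of_snz
    refine ⟨N + 1, ε₁, hε₁pos, fun ε hε hε1 hεe => ?_⟩
    rw [hdetnet, hdetabs]
    exact (key ε hε hε1 hεe).1
  · -- column 0
    intro i
    have hcol : Matrix.map Psub mkQ i 0 = mkQ (Psub i 0) := rfl
    rw [hcol]
    have htarget : (if i = 0 then (1:RTilde) else 0) = mkQ (if i = 0 then 1 else 0) := by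
      split <;> simp
    rw [htarget]
    apply mkQ_eq_of_eventually_eq _ _ ε₁ hε₁pos
    intro ε hε hε1 hεe
    have hj0 : jmax ε ≠ 0 := (key ε hε hε1 hεe).2
    have hswap : Equiv.swap (1 : Fin (m+2)) (jmax ε) 0 = 0 :=
      Equiv.swap_apply_of_ne_of_ne (by simp [Fin.ext_iff]) (Ne.symm hj0)
    have hval : (Psub i 0 : ℝ → ℝ) ε = if i = 0 then 1 else 0 := by
      show Fmat ε i 0 = _
      rw [hFapply, hswap, if_neg (Ne.symm hj0)]
    rw [hval]
    split <;> rfl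
  · -- column 1
    intro i
    have hcol : Matrix.map Psub mkQ i 1 = mkQ (Psub i 1) := rfl
    rw [hcol, ← hρ i]
    congr 1
    ext ε
    show Fmat ε i 1 = (ρ i : ℝ → ℝ) ε
    rw [hFapply, if_pos (Equiv.swap_apply_left _ _)]

end Colombeau
namespace Colombeau

open scoped Classical

theorem aux : ∀ n k : ℕ, k = 2 * n →
    ∀ σ : (Fin k → RTilde) →ₗ[RTilde] (Fin k → RTilde) →ₗ[RTilde] RTilde,
      (∀ v w, σ v w = - σ w v) → (∀ v, (∀ w, σ v w = 0) → v = 0) →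
      ∃ f : (Fin k → RTilde) ≃ₗ[RTilde] (Fin n → RTilde) × (Fin n → RTilde),
        ∀ v w, (∑ j, (f w).1 j * (f v).2 j) - (∑ j, (f v).1 j * (f w).2 j) = σ v w := by
  intro n
  induction n with
  | zero =>
    intro k hk σ hskew hnd
    haveI : IsEmpty (Fin k) := ⟨fun i => absurd i.2 (by omega)⟩
    refine ⟨LinearEquiv.ofSubsingleton _ _, fun v w => ?_⟩
    have hv : v = 0 := Subsingleton.elim v 0
    rw [hv]
    simp
  | succ n IH =>
    intro k hk σ hskew hnd
    obtain ⟨m, rfl⟩ : ∃ m, k = m + 2 := ⟨2 * n, by omega⟩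
    have hm : m = 2 * n := by omega
    set bb : Module.Basis (Fin (m + 2)) RTilde (Fin (m + 2) → RTilde) :=
      Pi.basisFun RTilde (Fin (m + 2)) with hbb
    -- general bilinear expansion along the coordinate basis
    have hexpand : ∀ (t : (Fin (m + 2) → RTilde) →ₗ[RTilde] RTilde) (x : Fin (m + 2) → RTilde),
        t x = ∑ j, x j * t (bb j) := by
      intro t x
      conv_lhs => rw [← Module.Basis.sum_repr bb x]
      rw [map_sum]
      refine Finset.sum_congr rfl fun j _ => ?_
      rw [map_smul, smul_eq_mul, hbb, Pi.basisFun_repr]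
    set u : Fin (m + 2) → RTilde := bb 0 with hu_def
    have hσuu : σ u u = 0 := eq_zero_of_eq_neg (hskew u u)
    have hc : IsUnit (∑ j, σ u (bb j) ^ 2) := by
      rw [hu_def]; exact sum_sq_isUnit bb σ hnd 0
    set cinv : RTilde := ((hc.unit⁻¹ : RTildeˣ) : RTilde) with hcinv_def
    have hccinv : cinv * (∑ j, σ u (bb j) ^ 2) = 1 := by
      rw [hcinv_def]
      exact hc.val_inv_mul
    set d : Fin (m + 2) → RTilde := fun j => cinv * σ u (bb j) with hd_def
    have hd0 : d 0 = 0 := by rw [hd_def]; simp only []; rw [← hu_def, hσuu, mul_zero]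
    have hdsq : (∑ j, d j ^ 2) = cinv := by
      have h1 : (∑ j, d j ^ 2) = cinv * (cinv * ∑ j, σ u (bb j) ^ 2) := by
        rw [Finset.mul_sum, Finset.mul_sum]
        refine Finset.sum_congr rfl fun j _ => ?_
        rw [hd_def]; ring
      rw [h1, hccinv, mul_one]
    have hdunit : IsUnit (∑ j, d j ^ 2) := by
      rw [hdsq, hcinv_def]; exact (hc.unit⁻¹).isUnit
    obtain ⟨P, hPdet, hP0, hP1⟩ := completion d hd0 hdunit
    set w : Fin (m + 2) → RTilde := fun i => P i 1 with hw_def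
    have hwd : ∀ i, w i = d i := fun i => hP1 i
    have hPu : ∀ i, P i 0 = u i := by
      intro i
      rw [hP0 i, hu_def, hbb, Pi.basisFun_apply, Pi.single_apply]
    -- values of σ on u, w
    have hσuw : σ u w = 1 := by
      rw [hexpand (σ u) w]
      have h1 : ∀ j, w j * σ u (bb j) = cinv * σ u (bb j) ^ 2 := by
        intro j; rw [hwd j, hd_def]; ring
      rw [Finset.sum_congr rfl fun j _ => h1 j, ← Finset.mul_sum, hccinv]
    have hσwu : σ w u = -1 := by rw [hskew w u, hσuw]
    have hσww : σ w w = 0 := eq_zero_of_eq_neg (hskew w w)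
    -- the orthogonalizing upper-triangular matrix
    set colP : Fin (m + 2) → (Fin (m + 2) → RTilde) := fun l i => P i l with hcolP
    set Q : Matrix (Fin (m + 2)) (Fin (m + 2)) RTilde := fun l r =>
      (if 2 ≤ (r : ℕ) ∧ l = 0 then σ w (colP r) else 0)
      + (if 2 ≤ (r : ℕ) ∧ l = 1 then -(σ u (colP r)) else 0)
      + (if l = r then 1 else 0) with hQ
    have hQtri : Q.BlockTriangular id := by
      intro i j hij
      show Q i j = 0
      simp only [hQ]
      have hij' : (j:ℕ) < (i:ℕ) := hij
      have h1 : ¬(2 ≤ (j:ℕ) ∧ i = 0) := by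
        rintro ⟨h2, rfl⟩
        simp only [Fin.val_zero] at hij'
        omega
      have h2 : ¬(2 ≤ (j:ℕ) ∧ i = 1) := by
        rintro ⟨h2, rfl⟩
        simp only [Fin.val_one] at hij'
        omega
      have h3 : i ≠ j := by
        intro h
        rw [h] at hij'
        omega
      rw [if_neg h1, if_neg h2, if_neg h3]
      ring
    have hQdet : Q.det = 1 := by
      rw [Matrix.det_of_upperTriangular hQtri]
      refine Finset.prod_eq_one fun i _ => ?_
      show Q i i = 1
      simp only [hQ]
      have h1 : ¬(2 ≤ (i:ℕ) ∧ i = 0) := by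
        rintro ⟨h2, rfl⟩
        simp only [Fin.val_zero] at h2
        omega
      have h2 : ¬(2 ≤ (i:ℕ) ∧ i = 1) := by
        rintro ⟨h2, rfl⟩
        simp only [Fin.val_one] at h2
        omega
      rw [if_neg h1, if_neg h2]
      simp
    have hMQdet : IsUnit (P * Q).det := by
      rw [Matrix.det_mul, hQdet, mul_one]; exact hPdet
    set B : Module.Basis (Fin (m + 2)) RTilde (Fin (m + 2) → RTilde) :=
      bb.map ((P * Q).toLinearEquiv' (Matrix.invertibleOfIsUnitDet _ hMQdet)) with hB
    have hBcol : ∀ r, B r = fun i => (P * Q) i r := by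
      intro r
      rw [hB, Module.Basis.map_apply, hbb, Pi.basisFun_apply]
      have h1 : ((P * Q).toLinearEquiv' ((P * Q).invertibleOfIsUnitDet hMQdet)) (Pi.single r 1)
          = Matrix.toLin' (P * Q) (Pi.single r 1) := rfl
      rw [h1, Matrix.toLin'_apply, Matrix.mulVec_single]
      funext i
      simp [Matrix.col_apply]
    have hQ0 : ∀ l, Q l 0 = if l = 0 then 1 else 0 := by
      intro l
      simp only [hQ]
      have hc0 : ¬(2 ≤ ((0 : Fin (m+2)) : ℕ)) := by
        simp only [Fin.val_zero]
        omega
      rw [if_neg (fun h => hc0 h.1), if_neg (fun h => hc0 h.1), zero_add, zero_add]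
    have hB0 : B 0 = u := by
      rw [hBcol 0]
      funext i
      show (∑ l, P i l * Q l 0) = u i
      simp only [hQ0, mul_ite, mul_one, mul_zero]
      rw [Finset.sum_ite_eq' Finset.univ (0 : Fin (m+2)) (fun l => P i l)]
      simp only [Finset.mem_univ, if_true]
      exact hPu i
    have hQ1 : ∀ l, Q l 1 = if l = 1 then 1 else 0 := by
      intro l
      simp only [hQ]
      have hc1 : ¬(2 ≤ ((1 : Fin (m+2)) : ℕ)) := by
        simp only [Fin.val_one]
        omega
      rw [if_neg (fun h => hc1 h.1), if_neg (fun h => hc1 h.1), zero_add, zero_add]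
    have hB1 : B 1 = w := by
      rw [hBcol 1]
      funext i
      show (∑ l, P i l * Q l 1) = w i
      simp only [hQ1, mul_ite, mul_one, mul_zero]
      rw [Finset.sum_ite_eq' Finset.univ (1 : Fin (m+2)) (fun l => P i l)]
      simp only [Finset.mem_univ, if_true]
      rfl
    have hBr : ∀ r : Fin (m + 2), 2 ≤ (r : ℕ) →
        B r = σ w (colP r) • u + (-(σ u (colP r))) • w + colP r := by
      intro r hr
      have hQr : ∀ l, Q l r = (if l = 0 then σ w (colP r) else 0)
          + (if l = 1 then -(σ u (colP r)) else 0) + (if l = r then 1 else 0) := by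
        intro l
        simp only [hQ]
        have e1 : (2 ≤ (r:ℕ) ∧ l = 0) ↔ l = 0 := and_iff_right hr
        have e2 : (2 ≤ (r:ℕ) ∧ l = 1) ↔ l = 1 := and_iff_right hr
        rw [if_congr e1 rfl rfl, if_congr e2 rfl rfl]
      rw [hBcol r]
      funext i
      show (∑ l, P i l * Q l r) = _
      simp only [hQr, mul_add]
      rw [Finset.sum_add_distrib, Finset.sum_add_distrib]
      simp only [mul_ite, mul_one, mul_zero]
      rw [Finset.sum_ite_eq' Finset.univ (0 : Fin (m+2)) (fun l => P i l * σ w (colP r)),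
        Finset.sum_ite_eq' Finset.univ (1 : Fin (m+2)) (fun l => P i l * -(σ u (colP r))),
        Finset.sum_ite_eq' Finset.univ r (fun l => P i l)]
      simp only [Finset.mem_univ, if_true, Pi.add_apply, Pi.smul_apply, smul_eq_mul]
      rw [hPu i]
      have h2 : P i 1 = w i := rfl
      have h3 : colP r i = P i r := rfl
      rw [h2, h3]
      ring
    -- orthogonality of the tail basis vectors
    have horthu : ∀ r : Fin (m + 2), 2 ≤ (r : ℕ) → σ (B 0) (B r) = 0 := by
      intro r hr
      rw [hB0, hBr r hr]
      simp only [map_add, map_smul, smul_eq_mul, map_neg]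
      rw [hσuu, hσuw]
      ring
    have horthw : ∀ r : Fin (m + 2), 2 ≤ (r : ℕ) → σ (B 1) (B r) = 0 := by
      intro r hr
      rw [hB1, hBr r hr]
      simp only [map_add, map_smul, smul_eq_mul, map_neg]
      rw [hσwu, hσww]
      ring
    have hne01 : ¬((0 : Fin (m + 2)) = 1) := by
      intro h
      have h2 := congrArg Fin.val h
      simp only [Fin.val_zero, Fin.val_one] at h2
      omega
    have hne10 : ¬((1 : Fin (m + 2)) = 0) := fun h => hne01 h.symm
    -- the embedding of the tail indices
    have hmlt : ∀ j : Fin (2 * n), (j : ℕ) + 2 < m + 2 := fun j => by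
      have := j.isLt; omega
    set emb : Fin (2 * n) → Fin (m + 2) := fun j => ⟨(j : ℕ) + 2, hmlt j⟩ with hemb
    have hembval : ∀ j, 2 ≤ ((emb j : Fin (m + 2)) : ℕ) := fun j => by simp [hemb]
    have hembinj : Function.Injective emb := by
      intro a b hab
      have h1 : (a : ℕ) + 2 = (b : ℕ) + 2 := congrArg Fin.val hab
      exact Fin.ext (by omega)
    have hembne0 : ∀ j, emb j ≠ 0 := fun j h => by
      have h1 := congrArg Fin.val h
      simp [hemb, Fin.val_zero] at h1
    have hembne1 : ∀ j, emb j ≠ 1 := fun j h => by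
      have h1 := congrArg Fin.val h
      simp [hemb, Fin.val_one] at h1
    have hcases : ∀ l : Fin (m + 2), l = 0 ∨ l = 1 ∨ ∃ j, emb j = l := by
      intro l
      rcases Nat.lt_or_ge (l : ℕ) 2 with h | h
      · rcases Nat.lt_or_ge (l : ℕ) 1 with h' | h'
        · left; exact Fin.ext (by simp only [Fin.val_zero]; omega)
        · right; left; exact Fin.ext (by simp only [Fin.val_one]; omega)
      · right; right
        refine ⟨⟨(l : ℕ) - 2, by have := l.isLt; omega⟩, Fin.ext ?_⟩
        show (l : ℕ) - 2 + 2 = (l : ℕ)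
        omega
    -- T : inclusion of the reduced coordinate module
    set T : (Fin (2 * n) → RTilde) →ₗ[RTilde] (Fin (m + 2) → RTilde) :=
      ∑ j : Fin (2 * n), (LinearMap.proj j).smulRight (B (emb j)) with hTdef
    have hT : ∀ x, T x = ∑ j, x j • B (emb j) := by
      intro x
      rw [hTdef, LinearMap.sum_apply]
      exact Finset.sum_congr rfl fun j _ => by
        rw [LinearMap.smulRight_apply, LinearMap.proj_apply]
    have hTsingle : ∀ j₀ : Fin (2 * n), T (Pi.single j₀ 1) = B (emb j₀) := by
      intro j₀
      rw [hT]
      have h1 : ∀ j : Fin (2 * n), (Pi.single j₀ (1 : RTilde) : Fin (2 * n) → RTilde) j • B (emb j)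
          = if j = j₀ then B (emb j) else 0 := by
        intro j
        rw [Pi.single_apply]
        split <;> simp
      rw [Finset.sum_congr rfl fun j _ => h1 j,
        Finset.sum_ite_eq' Finset.univ j₀ (fun j => B (emb j))]
      simp
    -- coordinates with respect to B
    have hcoordB : ∀ l r : Fin (m + 2), B.coord l (B r) = if r = l then 1 else 0 := by
      intro l r
      rw [Module.Basis.coord_apply, Module.Basis.repr_self, Finsupp.single_apply]
    have hcoordT : ∀ (l : Fin (m + 2)) y, B.coord l (T y)
        = ∑ j, y j * (if emb j = l then 1 else 0) := by
      intro l y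
      rw [hT, map_sum]
      exact Finset.sum_congr rfl fun j _ => by rw [map_smul, smul_eq_mul, hcoordB]
    have hcoordT0 : ∀ y, B.coord 0 (T y) = 0 := by
      intro y
      rw [hcoordT]
      exact Finset.sum_eq_zero fun j _ => by rw [if_neg (hembne0 j), mul_zero]
    have hcoordT1 : ∀ y, B.coord 1 (T y) = 0 := by
      intro y
      rw [hcoordT]
      exact Finset.sum_eq_zero fun j _ => by rw [if_neg (hembne1 j), mul_zero]
    set T' : (Fin (m + 2) → RTilde) →ₗ[RTilde] (Fin (2 * n) → RTilde) :=
      LinearMap.pi (fun j => B.coord (emb j)) with hT'def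
    have hT'app : ∀ v j, T' v j = B.coord (emb j) v := by
      intro v j; rw [hT'def, LinearMap.pi_apply]
    have hT'T : ∀ z, T' (T z) = z := by
      intro z
      funext j
      rw [hT'app, hcoordT]
      have h1 : ∀ j' : Fin (2 * n), z j' * (if emb j' = emb j then 1 else 0)
          = if j' = j then z j' else 0 := by
        intro j'
        by_cases h : j' = j
        · subst h; simp
        · rw [if_neg (fun hh => h (hembinj hh)), if_neg h, mul_zero]
      rw [Finset.sum_congr rfl fun j' _ => h1 j',
        Finset.sum_ite_eq' Finset.univ j (fun j' => z j')]
      simp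
    have hT'B0 : T' (B 0) = 0 := by
      funext j
      rw [hT'app, hcoordB, if_neg (fun h => hembne0 j h.symm)]
      rfl
    have hT'B1 : T' (B 1) = 0 := by
      funext j
      rw [hT'app, hcoordB, if_neg (fun h => hembne1 j h.symm)]
      rfl
    have hT'Br : ∀ j₀ : Fin (2 * n), T' (B (emb j₀)) = Pi.single j₀ 1 := by
      intro j₀
      funext j
      rw [hT'app, hcoordB, Pi.single_apply]
      by_cases h : j = j₀
      · subst h; simp
      · rw [if_neg (fun hh => h ((hembinj hh).symm)), if_neg h]
    -- decomposition of a vector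
    have hLdecomp : ((B.coord 0).smulRight (B 0) + (B.coord 1).smulRight (B 1)
        + T ∘ₗ T') = LinearMap.id := by
      refine B.ext fun r => ?_
      simp only [LinearMap.add_apply, LinearMap.smulRight_apply, LinearMap.comp_apply,
        LinearMap.id_apply]
      rcases hcases r with h | h | ⟨j₀, h⟩
      · subst h
        rw [hT'B0, map_zero T]
        simp [hcoordB, hne01]
      · subst h
        rw [hT'B1, map_zero T]
        simp [hcoordB, hne10]
      · subst h
        rw [hT'Br, hTsingle]
        simp [hcoordB, hembne0 j₀, hembne1 j₀]
    have hdecomp : ∀ v, B.coord 0 v • B 0 + B.coord 1 v • B 1 + T (T' v) = v := by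
      intro v
      have h1 := LinearMap.congr_fun hLdecomp v
      simp only [LinearMap.add_apply, LinearMap.smulRight_apply, LinearMap.comp_apply,
        LinearMap.id_apply] at h1
      exact h1
    -- σ values in terms of B
    have hσ00 : σ (B 0) (B 0) = 0 := by rw [hB0]; exact hσuu
    have hσ01 : σ (B 0) (B 1) = 1 := by rw [hB0, hB1]; exact hσuw
    have hσ10 : σ (B 1) (B 0) = -1 := by rw [hB0, hB1]; exact hσwu
    have hσ11 : σ (B 1) (B 1) = 0 := by rw [hB1]; exact hσww
    have horthT0 : ∀ y, σ (B 0) (T y) = 0 := by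
      intro y
      rw [hT, map_sum]
      exact Finset.sum_eq_zero fun j _ => by
        rw [map_smul, smul_eq_mul, horthu (emb j) (hembval j), mul_zero]
    have horthT1 : ∀ y, σ (B 1) (T y) = 0 := by
      intro y
      rw [hT, map_sum]
      exact Finset.sum_eq_zero fun j _ => by
        rw [map_smul, smul_eq_mul, horthw (emb j) (hembval j), mul_zero]
    have horthT0' : ∀ y, σ (T y) (B 0) = 0 := by
      intro y; rw [hskew, horthT0, neg_zero]
    have horthT1' : ∀ y, σ (T y) (B 1) = 0 := by
      intro y; rw [hskew, horthT1, neg_zero]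
    -- the reduced symplectic form
    set σ' : (Fin (2 * n) → RTilde) →ₗ[RTilde] (Fin (2 * n) → RTilde) →ₗ[RTilde] RTilde :=
      σ.compl₁₂ T T with hσ'def
    have hσ'app : ∀ x y, σ' x y = σ (T x) (T y) := fun x y => by
      rw [hσ'def, LinearMap.compl₁₂_apply]
    have hskew' : ∀ x y, σ' x y = - σ' y x := by
      intro x y; rw [hσ'app, hσ'app]; exact hskew _ _
    have hnd' : ∀ x, (∀ y, σ' x y = 0) → x = 0 := by
      intro x hx
      have hTx : T x = 0 := by
        apply hnd
        intro z
        conv_lhs => rw [← hdecomp z]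
        rw [map_add, map_add, map_smul, map_smul, smul_eq_mul, smul_eq_mul,
          horthT0' x, horthT1' x]
        have h2 := hx (T' z)
        rw [hσ'app] at h2
        rw [h2]
        ring
      funext j
      calc x j = T' (T x) j := by rw [hT'T]
      _ = (0 : Fin (2 * n) → RTilde) j := by rw [hTx, map_zero]
    obtain ⟨f', hf'⟩ := IH (2 * n) rfl σ' hskew' hnd'
    -- assembling the final equivalence
    set F1 : (Fin (m + 2) → RTilde) →ₗ[RTilde] (Fin (n + 1) → RTilde) :=
      LinearMap.pi (fun i : Fin (n + 1) => Fin.cases (B.coord 1)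
        (fun j => (LinearMap.proj j) ∘ₗ
          ((LinearMap.fst RTilde (Fin n → RTilde) (Fin n → RTilde)) ∘ₗ
            (f'.toLinearMap ∘ₗ T'))) i) with hF1def
    have hF1 : ∀ v, F1 v = Fin.cons (B.coord 1 v) (f' (T' v)).1 := by
      intro v
      funext i
      rw [hF1def, LinearMap.pi_apply]
      refine Fin.cases ?_ (fun j => ?_) i
      · rw [Fin.cases_zero, Fin.cons_zero]
      · rw [Fin.cases_succ, Fin.cons_succ]
        rfl
    set F2 : (Fin (m + 2) → RTilde) →ₗ[RTilde] (Fin (n + 1) → RTilde) :=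
      LinearMap.pi (fun i : Fin (n + 1) => Fin.cases (B.coord 0)
        (fun j => (LinearMap.proj j) ∘ₗ
          ((LinearMap.snd RTilde (Fin n → RTilde) (Fin n → RTilde)) ∘ₗ
            (f'.toLinearMap ∘ₗ T'))) i) with hF2def
    have hF2 : ∀ v, F2 v = Fin.cons (B.coord 0 v) (f' (T' v)).2 := by
      intro v
      funext i
      rw [hF2def, LinearMap.pi_apply]
      refine Fin.cases ?_ (fun j => ?_) i
      · rw [Fin.cases_zero, Fin.cons_zero]
      · rw [Fin.cases_succ, Fin.cons_succ]
        rfl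
    set fL := F1.prod F2 with hfLdef
    have hfL : ∀ v, fL v
        = (Fin.cons (B.coord 1 v) (f' (T' v)).1, Fin.cons (B.coord 0 v) (f' (T' v)).2) := by
      intro v
      rw [hfLdef, LinearMap.prod_apply, Function.prod, hF1 v, hF2 v]
    set tailL : (Fin (n + 1) → RTilde) →ₗ[RTilde] (Fin n → RTilde) :=
      LinearMap.funLeft RTilde RTilde Fin.succ with htailLdef
    have htailL : ∀ p, tailL p = Fin.tail p := fun _ => rfl
    set gL : ((Fin (n + 1) → RTilde) × (Fin (n + 1) → RTilde)) →ₗ[RTilde]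
        (Fin (m + 2) → RTilde) :=
      ((LinearMap.proj (0 : Fin (n + 1))) ∘ₗ (LinearMap.snd RTilde _ _)).smulRight (B 0)
      + ((LinearMap.proj (0 : Fin (n + 1))) ∘ₗ (LinearMap.fst RTilde _ _)).smulRight (B 1)
      + T ∘ₗ f'.symm.toLinearMap ∘ₗ
          ((tailL ∘ₗ LinearMap.fst RTilde _ _).prod (tailL ∘ₗ LinearMap.snd RTilde _ _))
        with hgLdef
    have hgL : ∀ p1 p2 : Fin (n + 1) → RTilde, gL (p1, p2)
        = p2 0 • B 0 + p1 0 • B 1 + T (f'.symm (Fin.tail p1, Fin.tail p2)) := by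
      intro p1 p2
      rw [hgLdef]
      simp only [LinearMap.add_apply, LinearMap.smulRight_apply, LinearMap.coe_comp,
        Function.comp_apply, LinearMap.proj_apply, LinearMap.fst_apply, LinearMap.snd_apply,
        LinearEquiv.coe_coe, LinearMap.prod_apply, Function.prod, htailL]
    have hgf : ∀ v, gL (fL v) = v := by
      intro v
      rw [hfL v, hgL]
      simp only [Fin.cons_zero, Fin.tail_cons]
      rw [show ((f' (T' v)).1, (f' (T' v)).2) = f' (T' v) from rfl,
        LinearEquiv.symm_apply_apply]
      exact hdecomp v
    have hfg : ∀ p : (Fin (n + 1) → RTilde) × (Fin (n + 1) → RTilde), fL (gL p) = p := by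
      rintro ⟨p1, p2⟩
      rw [hgL]
      set z := f'.symm (Fin.tail p1, Fin.tail p2) with hz
      have hc1 : B.coord 1 (p2 0 • B 0 + p1 0 • B 1 + T z) = p1 0 := by
        rw [map_add, map_add, map_smul, map_smul, smul_eq_mul, smul_eq_mul,
          hcoordB, hcoordB, hcoordT1, if_neg hne01, if_pos rfl]
        ring
      have hc0 : B.coord 0 (p2 0 • B 0 + p1 0 • B 1 + T z) = p2 0 := by
        rw [map_add, map_add, map_smul, map_smul, smul_eq_mul, smul_eq_mul,
          hcoordB, hcoordB, hcoordT0, if_pos rfl, if_neg hne10]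
        ring
      have hcT : T' (p2 0 • B 0 + p1 0 • B 1 + T z) = z := by
        rw [map_add, map_add, map_smul, map_smul, hT'B0, hT'B1, hT'T]
        simp
      rw [hfL, hc1, hc0, hcT, hz, LinearEquiv.apply_symm_apply]
      rw [Fin.cons_self_tail, Fin.cons_self_tail]
    refine ⟨LinearEquiv.ofLinear fL gL (LinearMap.ext hfg) (LinearMap.ext hgf), ?_⟩
    intro v v'
    rw [LinearEquiv.ofLinear_apply, LinearEquiv.ofLinear_apply, hfL v, hfL v']
    simp only [Fin.sum_univ_succ, Fin.cons_zero, Fin.cons_succ]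
    have hIH := hf' (T' v) (T' v')
    rw [hσ'app] at hIH
    have hexp : σ v v' = B.coord 1 v' * B.coord 0 v - B.coord 1 v * B.coord 0 v'
        + σ (T (T' v)) (T (T' v')) := by
      conv_lhs => rw [← hdecomp v, ← hdecomp v']
      simp only [map_add, LinearMap.add_apply, map_smul, LinearMap.smul_apply, smul_eq_mul]
      rw [hσ00, hσ01, hσ10, hσ11, horthT0 (T' v'), horthT1 (T' v'),
        horthT0' (T' v), horthT1' (T' v)]
      ring
    rw [hexp]
    linear_combination hIH

end Colombeau



namespace Colombeau

/-- Every free symplectic `ℝ̃`-module of finite rank `2n` is symplectomorphic to the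
standard model `(T^*(ℝ̃ⁿ), ω̃)`, where
`ω̃((x,ξ),(y,η)) = ∑ y_j ξ_j - ∑ x_j η_j`. -/
theorem symplectomorphic_to_standard_model {V : Type*} [AddCommGroup V] [Module RTilde V]
    (n : ℕ) (b₀ : Module.Basis (Fin (2 * n)) RTilde V)
    (σ : V →ₗ[RTilde] V →ₗ[RTilde] RTilde) (hσ : IsSymplecticForm σ) :
    ∃ f : V ≃ₗ[RTilde] (Fin n → RTilde) × (Fin n → RTilde),
      ∀ v w : V,
        (∑ j, (f w).1 j * (f v).2 j) - (∑ j, (f v).1 j * (f w).2 j) = σ v w := by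

  set E : V ≃ₗ[RTilde] (Fin (2 * n) → RTilde) := b₀.equivFun with hE
  set σ₀ : (Fin (2 * n) → RTilde) →ₗ[RTilde] (Fin (2 * n) → RTilde) →ₗ[RTilde] RTilde :=
    σ.compl₁₂ (E.symm : (Fin (2 * n) → RTilde) →ₗ[RTilde] V)
      (E.symm : (Fin (2 * n) → RTilde) →ₗ[RTilde] V) with hσ₀
  have hσ₀app : ∀ x y, σ₀ x y = σ (E.symm x) (E.symm y) := fun x y => rfl
  have hskew0 : ∀ x y, σ₀ x y = - σ₀ y x := by
    intro x y
    rw [hσ₀app, hσ₀app]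
    exact hσ.skew _ _
  have hnd0 : ∀ x, (∀ y, σ₀ x y = 0) → x = 0 := by
    intro x hx
    have h1 : E.symm x = 0 := by
      apply hσ.nondeg
      intro w
      have h2 := hx (E w)
      rwa [hσ₀app, LinearEquiv.symm_apply_apply] at h2
    have h3 := congrArg E h1
    rwa [LinearEquiv.apply_symm_apply, map_zero] at h3
  obtain ⟨f₀, hf₀⟩ := aux n (2 * n) rfl σ₀ hskew0 hnd0
  refine ⟨E.trans f₀, fun v w => ?_⟩
  have h1 := hf₀ (E v) (E w)
  rw [hσ₀app, LinearEquiv.symm_apply_apply, LinearEquiv.symm_apply_apply] at h1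
  simpa [LinearEquiv.trans_apply] using h1

end Colombeau
end

section
/- Let $(V,\sigma)$ be a free symplectic $\widetilde{\mathbb{R}}$-module of finite rank. Then for every $\varphi$ in the dual module $V'=\mathrm{L}_{\widetilde{\mathbb{R}}}(V,\widetilde{\mathbb{R}})$ there exists a unique element $h_\varphi\in V$ (the Hamiltonian vector corresponding to $\varphi$) such that $\varphi(v)=\sigma(h_\varphi,v)$ for all $v\in V$. Furthermore, the map $\varphi\mapsto h_\varphi$ is an $\widetilde{\mathbb{R}}$-linear isomorphism from $V'$ onto $V$. -/
open scoped BigOperators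

namespace Colombeau

lemma mem_negligibleIdeal_iff {r : moderateSubring} :
    r ∈ negligibleIdeal ↔ Negligible (r : ℝ → ℝ) := Iff.rfl

lemma isUnit_of_strict (r : moderateSubring) (k : ℕ) (ε₀ : ℝ) (hε₀ : 0 < ε₀)
    (h : ∀ ε : ℝ, 0 < ε → ε ≤ 1 → ε < ε₀ → ε ^ k ≤ |(r : ℝ → ℝ) ε|) :
    IsUnit (Ideal.Quotient.mk negligibleIdeal r) := by
  classical
  set y : ℝ → ℝ := fun ε => if 0 < ε ∧ ε ≤ 1 ∧ ε < ε₀ then ((r : ℝ → ℝ) ε)⁻¹ else 0 with hy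
  have hymod : Moderate y := by
    refine ⟨k, 1, one_pos, ε₀, hε₀, fun ε hε hε1 hεe => ?_⟩
    have hcond : 0 < ε ∧ ε ≤ 1 ∧ ε < ε₀ := ⟨hε, hε1, hεe⟩
    rw [hy]
    simp only [if_pos hcond]
    have h1 := h ε hε hε1 hεe
    have h2 : (0:ℝ) < ε ^ k := pow_pos hε k
    rw [abs_inv, one_div]
    exact inv_anti₀ h2 h1
  refine IsUnit.of_mul_eq_one (Ideal.Quotient.mk negligibleIdeal ⟨y, hymod⟩) ?_
  rw [← map_mul, ← map_one (Ideal.Quotient.mk negligibleIdeal), Ideal.Quotient.eq]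
  rw [mem_negligibleIdeal_iff]
  intro m
  refine ⟨1, one_pos, ε₀, hε₀, fun ε hε hε1 hεe => ?_⟩
  have h1 := h ε hε hε1 hεe
  have h2 : (0:ℝ) < ε ^ k := pow_pos hε k
  have hr0 : (r : ℝ → ℝ) ε ≠ 0 := by
    intro h0
    rw [h0] at h1
    simp only [abs_zero] at h1
    linarith
  have : ((r * ⟨y, hymod⟩ - 1 : moderateSubring) : ℝ → ℝ) ε = 0 := by
    push_cast
    simp only [Pi.sub_apply, Pi.mul_apply, Pi.one_apply, hy]
    rw [if_pos (show 0 < ε ∧ ε ≤ 1 ∧ ε < ε₀ from ⟨hε, hε1, hεe⟩), mul_inv_cancel₀ hr0, sub_self]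
  rw [this]
  simp only [abs_zero]
  positivity

lemma exists_small (r : moderateSubring)
    (h : ¬ IsUnit (Ideal.Quotient.mk negligibleIdeal r)) (k : ℕ) {δ : ℝ} (hδ : 0 < δ) :
    ∃ ε : ℝ, 0 < ε ∧ ε ≤ 1 ∧ ε < δ ∧ |(r : ℝ → ℝ) ε| < ε ^ k := by
  by_contra hc
  push_neg at hc
  exact h (isUnit_of_strict r k δ hδ fun ε h1 h2 h3 => hc ε h1 h2 h3)

end Colombeau

namespace Colombeau

lemma approx_kernel {ι : Type*} [Fintype ι] [DecidableEq ι] [Nonempty ι]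
    (M : Matrix ι ι ℝ) :
    ∃ v : ι → ℝ, (∃ i, |v i| = 1) ∧ (∀ i, |v i| ≤ 1) ∧
      ∀ i, |M.mulVec v i| ^ (Fintype.card ι) ≤ Nat.factorial (Fintype.card ι) * |M.det| := by
  set n := Fintype.card ι with hn
  have hn0 : n ≠ 0 := Fintype.card_ne_zero
  by_cases hd : M.det = 0
  · obtain ⟨w, hw0, hww⟩ := Matrix.exists_mulVec_eq_zero_iff.mpr hd
    have hne : (Finset.univ : Finset ι).Nonempty := Finset.univ_nonempty
    obtain ⟨i₀, -, hi₀⟩ := Finset.exists_mem_eq_sup' hne (fun i => |w i|)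
    set c := Finset.univ.sup' hne (fun i => |w i|) with hc
    have hcpos : 0 < c := by
      obtain ⟨j, hj⟩ := Function.ne_iff.mp hw0
      have h1 : |w j| ≤ c := by rw [hc]; exact Finset.le_sup' (fun i => |w i|) (Finset.mem_univ j)
      have h2 : 0 < |w j| := abs_pos.mpr hj
      linarith
    refine ⟨c⁻¹ • w, ⟨i₀, ?_⟩, ?_, ?_⟩
    · simp only [Pi.smul_apply, smul_eq_mul, abs_mul, abs_inv, abs_of_pos hcpos]
      rw [← hi₀, inv_mul_cancel₀ hcpos.ne']
    · intro i
      simp only [Pi.smul_apply, smul_eq_mul, abs_mul, abs_inv, abs_of_pos hcpos]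
      rw [inv_mul_le_iff₀ hcpos, mul_one, hc]
      exact Finset.le_sup' (fun i => |w i|) (Finset.mem_univ i)
    · intro i
      rw [Matrix.mulVec_smul, hww]
      simp [zero_pow hn0]
      positivity
  · have hdu : IsUnit M.det := isUnit_iff_ne_zero.mpr hd
    set B := M⁻¹ with hB
    have hMB : M * B = 1 := Matrix.mul_nonsing_inv M hdu
    have hdetB : B.det = (M.det)⁻¹ := by
      rw [hB, Matrix.det_nonsing_inv, Ring.inverse_eq_inv]
    have hne : (Finset.univ : Finset (ι × ι)).Nonempty := Finset.univ_nonempty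
    obtain ⟨p, -, hp⟩ := Finset.exists_mem_eq_sup' hne (fun p => |B p.1 p.2|)
    set m := Finset.univ.sup' hne (fun p : ι × ι => |B p.1 p.2|) with hm
    have hent : ∀ i j, |B i j| ≤ m := fun i j =>
      Finset.le_sup' (f := fun p : ι × ι => |B p.1 p.2|) (Finset.mem_univ (i, j))
    have hm0 : 0 < m := by
      by_contra h
      push_neg at h
      have hB0 : B = 0 := by
        ext i j
        have := hent i j
        have : |B i j| ≤ 0 := le_trans this h
        simpa using le_antisymm this (abs_nonneg _)
      rw [hB0, Matrix.det_zero] at hdetB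
      exact hd (by simpa using hdetB.symm)
    have hdetBle : |B.det| ≤ (Nat.factorial n : ℝ) * m ^ n := by
      rw [Matrix.det_apply']
      calc |∑ σ : Equiv.Perm ι, (Equiv.Perm.sign σ : ℝ) * ∏ i, B (σ i) i|
          ≤ ∑ σ : Equiv.Perm ι, |(Equiv.Perm.sign σ : ℝ) * ∏ i, B (σ i) i| :=
            Finset.abs_sum_le_sum_abs _ _
        _ ≤ ∑ _σ : Equiv.Perm ι, m ^ n := by
            refine Finset.sum_le_sum fun σ _ => ?_
            have hsign : |(Equiv.Perm.sign σ : ℝ)| = 1 := by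
              rcases Int.units_eq_one_or (Equiv.Perm.sign σ) with h | h <;> simp [h]
            rw [abs_mul, hsign, one_mul, Finset.abs_prod]
            calc ∏ i, |B (σ i) i| ≤ ∏ _i : ι, m :=
                  Finset.prod_le_prod (fun _ _ => abs_nonneg _) (fun i _ => hent _ _)
              _ = m ^ n := by rw [Finset.prod_const, Finset.card_univ]
        _ = (Nat.factorial n : ℝ) * m ^ n := by
            rw [Finset.sum_const, Finset.card_univ, Fintype.card_perm, nsmul_eq_mul]
    have key : 1 ≤ (Nat.factorial n : ℝ) * m ^ n * |M.det| := by
      have h1 : |M.det|⁻¹ ≤ (Nat.factorial n : ℝ) * m ^ n := by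
        rw [← abs_inv, ← hdetB]; exact hdetBle
      have h2 := mul_le_mul_of_nonneg_right h1 (abs_nonneg M.det)
      rwa [inv_mul_cancel₀ (abs_ne_zero.mpr hd)] at h2
    refine ⟨m⁻¹ • (fun i => B i p.2), ⟨p.1, ?_⟩, ?_, ?_⟩
    · simp only [Pi.smul_apply, smul_eq_mul, abs_mul, abs_inv, abs_of_pos hm0]
      rw [← hp, inv_mul_cancel₀ hm0.ne']
    · intro i
      simp only [Pi.smul_apply, smul_eq_mul, abs_mul, abs_inv, abs_of_pos hm0]
      rw [inv_mul_le_iff₀ hm0, mul_one]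
      exact hent i p.2
    · intro i
      have hcol : M.mulVec (fun j => B j p.2) i = (M * B) i p.2 := by
        simp [Matrix.mulVec, dotProduct, Matrix.mul_apply]
      have hmv : M.mulVec (m⁻¹ • (fun i => B i p.2)) i = m⁻¹ * (1 : Matrix ι ι ℝ) i p.2 := by
        rw [Matrix.mulVec_smul]
        simp only [Pi.smul_apply, smul_eq_mul]
        rw [hcol, hMB]
      rw [hmv]
      have habs : |m⁻¹ * (1 : Matrix ι ι ℝ) i p.2| ≤ m⁻¹ := by
        rw [abs_mul, abs_inv, abs_of_pos hm0]
        rcases eq_or_ne i p.2 with h | h <;>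
          simp [Matrix.one_apply, h, inv_nonneg.mpr hm0.le]
      calc |m⁻¹ * (1 : Matrix ι ι ℝ) i p.2| ^ n ≤ (m⁻¹) ^ n :=
            pow_le_pow_left₀ (abs_nonneg _) habs n
        _ ≤ (Nat.factorial n : ℝ) * |M.det| := by
            rw [inv_pow, ← one_div, div_le_iff₀ (pow_pos hm0 n)]
            linarith [key]

lemma isUnit_det_of_injective {ι : Type*} [Fintype ι] [DecidableEq ι]
    (A : Matrix ι ι RTilde) (hA : ∀ v : ι → RTilde, A.mulVec v = 0 → v = 0) :
    IsUnit A.det := by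
  classical
  rcases isEmpty_or_nonempty ι with h | h
  · rw [Matrix.det_isEmpty]; exact isUnit_one
  by_contra hu
  set q : moderateSubring →+* RTilde := Ideal.Quotient.mk negligibleIdeal with hq
  choose R hR using fun i j => Ideal.Quotient.mk_surjective (I := negligibleIdeal) (A i j)
  set Rm : Matrix ι ι moderateSubring := Matrix.of R with hRm
  have hAq : A = (q.mapMatrix : Matrix ι ι moderateSubring →+* Matrix ι ι RTilde) Rm := by
    ext i j
    exact (hR i j).symm
  have hdet : A.det = q Rm.det := by
    rw [hAq]
    exact (RingHom.map_det q Rm).symm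
  set Dv : ℝ → ℝ := ((Rm.det : moderateSubring) : ℝ → ℝ) with hDv
  set Rε : ℝ → Matrix ι ι ℝ := fun ε => Matrix.of fun i j => (Rm i j : ℝ → ℝ) ε with hRε
  have hDval : ∀ ε : ℝ, Dv ε = (Rε ε).det := by
    intro ε
    exact RingHom.map_det ((Pi.evalRingHom (fun _ : ℝ => ℝ) ε).comp
      (SubringClass.subtype moderateSubring)) Rm
  have hu' : ¬ IsUnit (q Rm.det) := by rwa [← hdet]
  have hsm : ∀ k : ℕ, ∃ ε : ℝ, 0 < ε ∧ ε ≤ 1 ∧ ε < 1/(k+1) ∧ |Dv ε| < ε ^ k :=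
    fun k => exists_small Rm.det hu' k (by positivity)
  choose εs hεs0 hεs1 hεs2 hεs3 using hsm
  set n := Fintype.card ι with hn
  have hn0 : n ≠ 0 := Fintype.card_ne_zero
  have hnfac : (0:ℝ) < Nat.factorial n := by exact_mod_cast Nat.factorial_pos n
  choose w hw1 hw2 hw3 using fun ε : ℝ => approx_kernel (Rε ε)
  set S : Set ℝ := Set.range εs with hS
  set v : ι → ℝ → ℝ := fun i ε => if ε ∈ S then w ε i else 0 with hv
  have hvmod : ∀ i, Moderate (v i) := by
    intro i
    refine ⟨0, 1, one_pos, 1, one_pos, fun ε hε hε1 _ => ?_⟩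
    rw [pow_zero, div_one, hv]
    by_cases hεS : ε ∈ S
    · simp only [if_pos hεS]
      exact hw2 ε i
    · simp only [if_neg hεS, abs_zero]
      exact zero_le_one
  set vm : ι → moderateSubring := fun i => ⟨v i, hvmod i⟩ with hvm
  set Vv : ι → RTilde := fun i => q (vm i) with hVv
  have hmv : A.mulVec Vv = 0 := by
    funext j
    show ∑ i, A j i * Vv i = 0
    have hterm : ∀ i, A j i * Vv i = q (Rm j i * vm i) := by
      intro i
      rw [map_mul]
      rw [hVv]
      congr 1
      exact (hR j i).symm
    rw [Finset.sum_congr rfl (fun i _ => hterm i), ← map_sum]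
    refine Ideal.Quotient.eq_zero_iff_mem.mpr (mem_negligibleIdeal_iff.mpr ?_)
    intro m
    set F : Finset ℝ := insert 1 ((Finset.range (n*m)).image εs) with hF
    have hFne : F.Nonempty := ⟨1, Finset.mem_insert_self _ _⟩
    have hFpos : ∀ x ∈ F, (0:ℝ) < x := by
      intro x hx
      rcases Finset.mem_insert.mp hx with rfl | hx
      · exact one_pos
      · obtain ⟨j', -, rfl⟩ := Finset.mem_image.mp hx
        exact hεs0 j'
    set ε₁ := F.min' hFne with hε₁
    have hε₁pos : 0 < ε₁ := hFpos _ (F.min'_mem hFne)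
    refine ⟨(Nat.factorial n : ℝ), hnfac, ε₁, hε₁pos, fun ε hε hε1 hεe => ?_⟩
    have hval : ((∑ i, Rm j i * vm i : moderateSubring) : ℝ → ℝ) ε
        = ∑ i, (Rm j i : ℝ → ℝ) ε * v i ε := by
      rw [AddSubmonoidClass.coe_finset_sum, Finset.sum_apply]
      exact Finset.sum_congr rfl fun i _ => rfl
    by_cases hεS : ε ∈ S
    · obtain ⟨k, hk⟩ := hεS
      subst hk
      have hk_ge : n*m ≤ k := by
        by_contra hlt
        push_neg at hlt
        have hmem : εs k ∈ F :=
          Finset.mem_insert_of_mem (Finset.mem_image_of_mem εs (Finset.mem_range.mpr hlt))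
        have := F.min'_le _ hmem
        linarith
      set ε := εs k with hkk
      have hvv : ∑ i, (Rm j i : ℝ → ℝ) ε * v i ε = (Rε ε).mulVec (w ε) j := by
        have hεS' : ε ∈ S := ⟨k, rfl⟩
        simp only [hv, if_pos hεS']
        simp [Matrix.mulVec, dotProduct, hRε]
      have hD : |(Rε ε).det| ≤ ε ^ (n*m) := by
        have h1 : |Dv ε| < ε ^ k := hεs3 k
        have h2 : ε ^ k ≤ ε ^ (n*m) := pow_le_pow_of_le_one hε.le hε1 hk_ge
        rw [hDval] at h1
        linarith
      have hpow : |(Rε ε).mulVec (w ε) j| ^ n ≤ ((Nat.factorial n : ℝ) * ε ^ m) ^ n := by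
        calc |(Rε ε).mulVec (w ε) j| ^ n ≤ Nat.factorial n * |(Rε ε).det| := hw3 ε j
          _ ≤ Nat.factorial n * ε ^ (n*m) := by
              exact mul_le_mul_of_nonneg_left hD hnfac.le
          _ ≤ (Nat.factorial n : ℝ) ^ n * ε ^ (m*n) := by
              rw [mul_comm m n]
              exact mul_le_mul_of_nonneg_right
                (le_self_pow₀ (by exact_mod_cast Nat.one_le_iff_ne_zero.mpr (Nat.factorial_ne_zero n)) hn0)
                (by positivity)
          _ = ((Nat.factorial n : ℝ) * ε ^ m) ^ n := by rw [mul_pow, pow_mul]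
      have := le_of_pow_le_pow_left₀ hn0 (by positivity) hpow
      rw [hval, hvv]
      exact this
    · rw [hval]
      have : ∀ i, (Rm j i : ℝ → ℝ) ε * v i ε = 0 := by
        intro i
        simp [hv, if_neg hεS]
      rw [Finset.sum_congr rfl (fun i _ => this i), Finset.sum_const_zero, abs_zero]
      positivity
  have hVv0 : Vv = 0 := hA Vv hmv
  have hneg : ∀ i, Negligible (v i) := by
    intro i
    have h0 : q (vm i) = 0 := congrFun hVv0 i
    exact mem_negligibleIdeal_iff.mp (Ideal.Quotient.eq_zero_iff_mem.mp h0)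
  choose Cf hCf ef hef hbound using fun i => hneg i 1
  have hune : (Finset.univ : Finset ι).Nonempty := Finset.univ_nonempty
  set C := Finset.univ.sup' hune Cf with hC
  set e := Finset.univ.inf' hune ef with he
  have hCle : ∀ i, Cf i ≤ C := fun i => Finset.le_sup' Cf (Finset.mem_univ i)
  have hele : ∀ i, e ≤ ef i := fun i => Finset.inf'_le ef (Finset.mem_univ i)
  have hCpos : 0 < C := lt_of_lt_of_le (hCf (Classical.arbitrary ι)) (hCle _)
  have hepos : 0 < e := by
    obtain ⟨i₀, -, hi₀⟩ := Finset.exists_mem_eq_inf' hune ef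
    rw [he, hi₀]
    exact hef i₀
  obtain ⟨k, hkgt⟩ := exists_nat_gt (max (1/e) C)
  have hk1 : (0:ℝ) < k + 1 := by positivity
  have hεsk : εs k < 1/(k+1) := hεs2 k
  have hεe : εs k < e := by
    have h1 : 1/e < (k:ℝ) + 1 := lt_of_le_of_lt (le_max_left _ _) (by exact_mod_cast lt_add_of_lt_of_pos hkgt one_pos)
    have h2 : 1/((k:ℝ)+1) < e := by
      rw [div_lt_iff₀ hk1]
      have h3 := (div_lt_iff₀ hepos).mp h1
      linarith
    linarith
  obtain ⟨i, hi⟩ := hw1 (εs k)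
  have hviεs : v i (εs k) = w (εs k) i := by
    rw [hv]
    exact if_pos ⟨k, rfl⟩
  have hb := hbound i (εs k) (hεs0 k) (hεs1 k) (lt_of_lt_of_le hεe (hele i))
  rw [hviεs, hi, pow_one] at hb
  have hCk : C < (k:ℝ) + 1 := lt_of_le_of_lt (le_max_right (1/e) C) (by exact_mod_cast lt_add_of_lt_of_pos hkgt one_pos)
  have h4 : Cf i * εs k ≤ C * εs k := mul_le_mul_of_nonneg_right (hCle i) (hεs0 k).le
  have h5 : C * εs k < C * (1/(k+1)) := mul_lt_mul_of_pos_left hεsk hCpos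
  have h6 : C * (1/((k:ℝ)+1)) < 1 := by
    rw [mul_one_div, div_lt_one hk1]
    exact hCk
  linarith

end Colombeau

namespace Colombeau

open Matrix

/-- In a free symplectic `ℝ̃`-module `(V,σ)` of finite rank, every `φ` in the dual
module `V' = L(V,ℝ̃)` has a unique Hamiltonian vector `h_φ ∈ V` with
`φ(v) = σ(h_φ, v)` for all `v ∈ V`, and `φ ↦ h_φ` is an `ℝ̃`-linear isomorphism
`V' → V`. -/
theorem exists_unique_hamiltonian_vector {V : Type*} [AddCommGroup V] [Module RTilde V]
    [Module.Free RTilde V] [Module.Finite RTilde V]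
    (σ : V →ₗ[RTilde] V →ₗ[RTilde] RTilde) (hσ : IsSymplecticForm σ) :
    (∀ φ : V →ₗ[RTilde] RTilde, ∃! h : V, ∀ v : V, φ v = σ h v) ∧
    ∃ T : (V →ₗ[RTilde] RTilde) ≃ₗ[RTilde] V,
      ∀ (φ : V →ₗ[RTilde] RTilde) (v : V), φ v = σ (T φ) v := by
  classical
  set ι := Module.Free.ChooseBasisIndex RTilde V with hι
  set b : Module.Basis ι RTilde V := Module.Free.chooseBasis RTilde V with hb
  set G : Matrix ι ι RTilde := Matrix.of fun i j => σ (b i) (b j) with hG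
  have hcomp : ∀ (x : ι → RTilde) (j : ι),
      σ (b.equivFun.symm x) (b j) = (Gᵀ).mulVec x j := by
    intro x j
    rw [Module.Basis.equivFun_symm_apply, map_sum, LinearMap.sum_apply]
    show ∑ i, (σ (x i • b i)) (b j) = ∑ i, σ (b i) (b j) * x i
    refine Finset.sum_congr rfl fun i _ => ?_
    rw [_root_.map_smul, LinearMap.smul_apply, smul_eq_mul, mul_comm]
  have hinj : ∀ x : ι → RTilde, (Gᵀ).mulVec x = 0 → x = 0 := by
    intro x hx
    have hsig : σ (b.equivFun.symm x) = 0 := by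
      apply b.ext
      intro j
      rw [hcomp x j, hx]
      rfl
    have hz : b.equivFun.symm x = 0 :=
      hσ.nondeg _ (fun w => by rw [hsig]; rfl)
    have := b.equivFun.symm.injective (by rw [hz, map_zero] : b.equivFun.symm x = b.equivFun.symm 0)
    exact this
  have hdetG : IsUnit (Gᵀ).det := isUnit_det_of_injective _ hinj
  set B := (Gᵀ)⁻¹ with hB
  have hGB : Gᵀ * B = 1 := Matrix.mul_nonsing_inv _ hdetG
  set c : (V →ₗ[RTilde] RTilde) →ₗ[RTilde] (ι → RTilde) :=
    LinearMap.pi (fun i => LinearMap.applyₗ (b i)) with hc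
  set L : (V →ₗ[RTilde] RTilde) →ₗ[RTilde] V :=
    (b.equivFun.symm.toLinearMap) ∘ₗ (Matrix.mulVecLin B) ∘ₗ c with hL
  have hkey : ∀ (φ : V →ₗ[RTilde] RTilde) (u : V), φ u = σ (L φ) u := by
    intro φ
    suffices h : σ (L φ) = φ by intro u; rw [h]
    apply b.ext
    intro j
    have hLφ : L φ = b.equivFun.symm (B.mulVec (fun i => φ (b i))) := rfl
    rw [hLφ, hcomp, Matrix.mulVec_mulVec, hGB, Matrix.one_mulVec]
  have hinjσ : Function.Injective σ := by
    intro u₁ u₂ hequ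
    have h1 : σ (u₁ - u₂) = 0 := by rw [map_sub, hequ, sub_self]
    have h2 := hσ.nondeg (u₁ - u₂) (fun w => by rw [h1]; rfl)
    exact sub_eq_zero.mp h2
  have hTleft : L ∘ₗ σ = LinearMap.id := by
    ext u
    exact hinjσ (LinearMap.ext fun w => (hkey (σ u) w).symm)
  have hTright : σ ∘ₗ L = LinearMap.id := by
    ext φ u
    exact (hkey φ u).symm
  refine ⟨?_, ⟨LinearEquiv.ofLinear L σ hTleft hTright, fun φ u => hkey φ u⟩⟩
  intro φ
  refine ⟨L φ, fun u => hkey φ u, ?_⟩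
  intro h hh
  exact hinjσ (LinearMap.ext fun w => ((hh w).symm.trans (hkey φ w)))

end Colombeau
end

section
/- Let $(V,\sigma)$ be a free symplectic $\widetilde{\mathbb{R}}$-module of finite rank. Then $(V',\{\,\,,\,\})$, where $V'$ is the dual module and $\{\,\,,\,\}$ is the Poisson bracket, is a symplectic $\widetilde{\mathbb{R}}$-module that is free and of the same rank as $V$. -/
open scoped BigOperators

namespace Colombeau

lemma one_not_negligible : (1 : moderateSubring) ∉ negligibleIdeal := by
  intro h
  obtain ⟨C, hC, e0, he0, hb⟩ := h 1
  set ε : ℝ := min (e0 / 2) (min 1 (1 / (2 * C))) with hε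
  have hεpos : 0 < ε := by positivity
  have h1 : ε ≤ 1 := le_trans (min_le_right _ _) (min_le_left _ _)
  have h2 : ε < e0 := lt_of_le_of_lt (min_le_left _ _) (by linarith)
  have := hb ε hεpos h1 h2
  have hle : C * ε ≤ C * (1 / (2 * C)) := by
    have : ε ≤ 1 / (2 * C) := le_trans (min_le_right _ _) (min_le_right _ _)
    exact mul_le_mul_of_nonneg_left this hC.le
  have : (1 : ℝ) ≤ 1 / 2 := by
    have habs : |(1 : ℝ → ℝ) ε| = 1 := by norm_num [Pi.one_apply]
    have hCne : C ≠ 0 := hC.ne'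
    calc (1:ℝ) = |(1 : ℝ → ℝ) ε| := habs.symm
      _ ≤ C * ε ^ 1 := this
      _ = C * ε := by ring
      _ ≤ C * (1 / (2 * C)) := hle
      _ = 1 / 2 := by field_simp
  linarith

instance inst_s11 : Nontrivial RTilde := by
  have : negligibleIdeal ≠ ⊤ := (Ideal.ne_top_iff_one _).mpr one_not_negligible
  exact Ideal.Quotient.nontrivial_iff.mpr this

/-- For a free symplectic `ℝ̃`-module `(V,σ)` of finite rank, the dual module `V'`
together with the Poisson bracket `{φ,ψ} = σ(h_φ,h_ψ)` is a symplectic `ℝ̃`-module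
that is free and of the same rank as `V`. Here the Hamiltonian vectors are provided
by a map `H` with `φ(v) = σ(H φ, v)` for all `v`. -/
theorem dual_with_poisson_bracket_is_symplectic {V : Type*} [AddCommGroup V]
    [Module RTilde V] [Module.Free RTilde V] [Module.Finite RTilde V]
    (σ : V →ₗ[RTilde] V →ₗ[RTilde] RTilde) (hσ : IsSymplecticForm σ)
    (H : (V →ₗ[RTilde] RTilde) → V)
    (hH : ∀ (φ : V →ₗ[RTilde] RTilde) (v : V), φ v = σ (H φ) v) :
    Module.Free RTilde (V →ₗ[RTilde] RTilde) ∧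
    Module.Finite RTilde (V →ₗ[RTilde] RTilde) ∧
    Module.finrank RTilde (V →ₗ[RTilde] RTilde) = Module.finrank RTilde V ∧
    ∃ B : (V →ₗ[RTilde] RTilde) →ₗ[RTilde] (V →ₗ[RTilde] RTilde) →ₗ[RTilde] RTilde,
      (∀ φ ψ : V →ₗ[RTilde] RTilde, B φ ψ = σ (H φ) (H ψ)) ∧
      IsSymplecticForm B := by
  classical
  have hHadd : ∀ φ ψ : V →ₗ[RTilde] RTilde, H (φ + ψ) = H φ + H ψ := by
    intro φ ψ
    have h0 : H (φ + ψ) - (H φ + H ψ) = 0 := by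
      refine hσ.nondeg _ (fun w => ?_)
      simp only [map_sub, map_add, LinearMap.sub_apply, LinearMap.add_apply, ← hH]
      simp
    exact sub_eq_zero.mp h0
  have hHsmul : ∀ (c : RTilde) (φ : V →ₗ[RTilde] RTilde), H (c • φ) = c • H φ := by
    intro c φ
    have h0 : H (c • φ) - c • H φ = 0 := by
      refine hσ.nondeg _ (fun w => ?_)
      simp only [map_sub, map_smul, LinearMap.sub_apply, LinearMap.smul_apply, ← hH]
      simp
    exact sub_eq_zero.mp h0
  let Hlin : (V →ₗ[RTilde] RTilde) →ₗ[RTilde] V :=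
    { toFun := H, map_add' := hHadd, map_smul' := hHsmul }
  have hHσ : ∀ v : V, H (σ v) = v := by
    intro v
    have h0 : H (σ v) - v = 0 := by
      refine hσ.nondeg _ (fun w => ?_)
      simp only [map_sub, LinearMap.sub_apply, ← hH]
      simp
    exact sub_eq_zero.mp h0
  refine ⟨inferInstance, inferInstance, ?_, ?_⟩
  · rw [Module.finrank_linearMap, Module.finrank_self, mul_one]
  · refine ⟨{ toFun := fun φ => φ.comp Hlin,
              map_add' := fun φ ψ => LinearMap.add_comp _ _ _,
              map_smul' := fun c φ => LinearMap.smul_comp _ _ _ }, ?_, ?_⟩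
    · intro φ ψ
      simp only [LinearMap.coe_mk, AddHom.coe_mk, LinearMap.comp_apply]
      exact hH φ (Hlin ψ)
    · constructor
      · intro φ ψ
        simp only [LinearMap.coe_mk, AddHom.coe_mk, LinearMap.comp_apply]
        show φ (Hlin ψ) = - ψ (Hlin φ)
        rw [hH φ (Hlin ψ), hH ψ (Hlin φ)]
        exact hσ.skew _ _
      · intro φ hφ
        ext v
        have := hφ (σ v)
        simp only [LinearMap.coe_mk, AddHom.coe_mk, LinearMap.comp_apply] at this
        have hv : Hlin (σ v) = v := hHσ v
        rw [hv] at this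
        simpa using this


end Colombeau
end
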